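/- arXiv:2411.01005 — 4 statements merged into one kernel-verified Lean document; each statement's English description precedes it below -/
import Mathlib

section
/- If X is a minimal finite space and f : X → X is a continuous map homotopic to the identity, then f equals the identity. -/
/-- The minimal open set containing `x`: the intersection of all open sets containing `x`. -/
def minOpen {X : Type*} [TopologicalSpace X] (x : X) : Set X :=
  ⋂₀ {U : Set X | IsOpen U ∧ x ∈ U}

/-- The specialization order: `x ≤ y` iff `U_x ⊆ U_y`. -/
def sle {X : Type*} [TopologicalSpace X] (x y : X) : Prop := minOpen x ⊆ minOpen y

/-- Strict specialization order. -/
def slt {X : Type*} [TopologicalSpace X] (x y : X) : Prop := sle x y ∧ x ≠ y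

/-- A point `x` is up-beat if there is `y > x` such that every `z > x` satisfies `z ≥ y`. -/
def UpBeat {X : Type*} [TopologicalSpace X] (x : X) : Prop :=
  ∃ y : X, slt x y ∧ ∀ z : X, slt x z → sle y z

/-- A point `x` is down-beat if there is `y < x` such that every `z < x` satisfies `z ≤ y`. -/
def DownBeat {X : Type*} [TopologicalSpace X] (x : X) : Prop :=
  ∃ y : X, slt y x ∧ ∀ z : X, slt z x → sle z y

/-- A minimal finite space: a finite T0 space with no up-beat and no down-beat points. -/
def IsMinimalFiniteSpace (X : Type*) [TopologicalSpace X] : Prop :=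
  Finite X ∧ T0Space X ∧ ∀ x : X, ¬ UpBeat x ∧ ¬ DownBeat x

section Aux

variable {X : Type*} [TopologicalSpace X]

lemma mem_minOpen_iff {x z : X} : z ∈ minOpen x ↔ z ⤳ x := by
  rw [minOpen, Set.mem_sInter, specializes_iff_forall_open]
  constructor
  · intro h U hU hx
    exact h U ⟨hU, hx⟩
  · intro h U hU
    exact h U hU.1 hU.2

lemma self_mem_minOpen (x : X) : x ∈ minOpen x := mem_minOpen_iff.mpr specializes_rfl

lemma sle_iff {x y : X} : sle x y ↔ x ⤳ y := by
  constructor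
  · intro h
    exact mem_minOpen_iff.mp (h (self_mem_minOpen x))
  · intro h z hz
    exact mem_minOpen_iff.mpr ((mem_minOpen_iff.mp hz).trans h)

lemma sle_refl (x : X) : sle x x := subset_rfl

lemma sle_antisymm [T0Space X] {x y : X} (h1 : sle x y) (h2 : sle y x) : x = y :=
  ((sle_iff.mp h1).antisymm (sle_iff.mp h2)).eq

lemma sle_map {f : X → X} (hf : Continuous f) {x y : X} (h : sle x y) :
    sle (f x) (f y) :=
  sle_iff.mpr ((sle_iff.mp h).map hf)

lemma isOpen_minOpen [Finite X] (x : X) : IsOpen (minOpen x) :=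
  (Set.toFinite _).isOpen_sInter (fun _ hU => hU.1)

/-- Core lemma (down case): a continuous self-map pointwise below the identity on a
minimal finite space is the identity. -/
lemma eq_id_of_forall_sle [Finite X] [T0Space X]
    (hmin : ∀ x : X, ¬ UpBeat x ∧ ¬ DownBeat x)
    (g : C(X, X)) (hle : ∀ x, sle (g x) x) : g = ContinuousMap.id X := by
  by_contra hne
  have hB : {x : X | g x ≠ x}.Nonempty := by
    by_contra hemp
    apply hne
    ext x
    by_contra hx
    exact hemp ⟨x, hx⟩
  obtain ⟨x, hxB, hxmin⟩ :=
    Set.exists_min_image {x : X | g x ≠ x} (fun x => (minOpen x).ncard) (Set.toFinite _) hB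
  apply (hmin x).2
  refine ⟨g x, ⟨hle x, hxB⟩, ?_⟩
  intro z hz
  have hzfix : g z = z := by
    by_contra hzne
    have hsub : minOpen z ⊂ minOpen x :=
      ⟨hz.1, fun hsub => hz.2 (sle_antisymm hz.1 hsub)⟩
    exact absurd (Set.ncard_lt_ncard hsub (Set.toFinite _)) (not_lt.mpr (hxmin z hzne))
  have := sle_map g.continuous hz.1
  rwa [hzfix] at this

/-- Core lemma (up case). -/
lemma eq_id_of_forall_sle' [Finite X] [T0Space X]
    (hmin : ∀ x : X, ¬ UpBeat x ∧ ¬ DownBeat x)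
    (g : C(X, X)) (hle : ∀ x, sle x (g x)) : g = ContinuousMap.id X := by
  by_contra hne
  have hB : {x : X | g x ≠ x}.Nonempty := by
    by_contra hemp
    apply hne
    ext x
    by_contra hx
    exact hemp ⟨x, hx⟩
  obtain ⟨x, hxB, hxmax⟩ :=
    Set.exists_max_image {x : X | g x ≠ x} (fun x => (minOpen x).ncard) (Set.toFinite _) hB
  apply (hmin x).1
  refine ⟨g x, ⟨hle x, fun h => hxB h.symm⟩, ?_⟩
  intro z hz
  have hzfix : g z = z := by
    by_contra hzne
    have hsub : minOpen x ⊂ minOpen z :=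
      ⟨hz.1, fun hsub => hz.2 (sle_antisymm hz.1 hsub)⟩
    exact absurd (Set.ncard_lt_ncard hsub (Set.toFinite _)) (not_lt.mpr (hxmax z hzne))
  have := sle_map g.continuous hz.1
  rwa [hzfix] at this

/-- Comparability relation on continuous self-maps. -/
def CompRelMap (X : Type*) [TopologicalSpace X] (a b : C(X, X)) : Prop :=
  (∀ x, sle (a x) (b x)) ∨ (∀ x, sle (b x) (a x))

lemma eq_id_of_eqvGen [Finite X] [T0Space X]
    (hmin : ∀ x : X, ¬ UpBeat x ∧ ¬ DownBeat x)
    {g : C(X, X)} (h : Relation.EqvGen (CompRelMap X) g (ContinuousMap.id X)) :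
    g = ContinuousMap.id X := by
  suffices H : ∀ a b : C(X, X), Relation.EqvGen (CompRelMap X) a b →
      (a = ContinuousMap.id X ↔ b = ContinuousMap.id X) by
    exact (H _ _ h).mpr rfl
  intro a b hab
  induction hab with
  | rel a b hr =>
    constructor
    · intro ha
      subst ha
      rcases hr with hr | hr
      · exact (eq_id_of_forall_sle' hmin b (fun x => hr x)).symm ▸ rfl
      · exact eq_id_of_forall_sle hmin b (fun x => hr x)
    · intro hb
      subst hb
      rcases hr with hr | hr
      · exact eq_id_of_forall_sle hmin a (fun x => hr x)
      · exact eq_id_of_forall_sle' hmin a (fun x => hr x)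
  | refl a => exact Iff.rfl
  | symm a b _ ih => exact ih.symm
  | trans a b c _ _ ih1 ih2 => exact ih1.trans ih2

end Aux

/-- If `X` is a minimal finite space and `f : X → X` is homotopic to the identity,
then `f` is the identity. -/
theorem eq_id_of_homotopic_id {X : Type*} [TopologicalSpace X]
    (hX : IsMinimalFiniteSpace X) (f : C(X, X))
    (h : f.Homotopic (ContinuousMap.id X)) : f = ContinuousMap.id X := by
  obtain ⟨hFin, hT0, hmin⟩ := hX
  haveI := hFin
  haveI := hT0
  obtain ⟨F⟩ := h
  -- local comparability
  have key : ∀ t : unitInterval, ∃ J : Set unitInterval, IsOpen J ∧ t ∈ J ∧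
      ∀ s ∈ J, ∀ x : X, sle (F.curry s x) (F.curry t x) := by
    intro t
    refine ⟨⋂ x : X, (fun s : unitInterval => F.curry s x) ⁻¹' minOpen (F.curry t x),
      ?_, ?_, ?_⟩
    · apply isOpen_iInter_of_finite
      intro x
      have hc : Continuous fun s : unitInterval => F.curry s x := by
        have : Continuous fun s : unitInterval => F (s, x) :=
          F.continuous.comp (by continuity)
        simpa [ContinuousMap.Homotopy.curry_apply] using this
      exact hc.isOpen_preimage _ (isOpen_minOpen _)
    · exact Set.mem_iInter.mpr fun x => self_mem_minOpen _
    · intro s hs x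
      have := Set.mem_iInter.mp hs x
      exact sle_iff.mpr (mem_minOpen_iff.mp this)
  set A : Set unitInterval :=
    {t | Relation.EqvGen (CompRelMap X) (F.curry t) (ContinuousMap.id X)} with hA
  have hstep : ∀ t : unitInterval, ∃ J : Set unitInterval, IsOpen J ∧ t ∈ J ∧
      ∀ s ∈ J, (s ∈ A ↔ t ∈ A) := by
    intro t
    obtain ⟨J, hJo, htJ, hJ⟩ := key t
    refine ⟨J, hJo, htJ, fun s hs => ?_⟩
    have hrel : Relation.EqvGen (CompRelMap X) (F.curry s) (F.curry t) :=
      Relation.EqvGen.rel _ _ (Or.inl (hJ s hs))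
    constructor
    · intro hsA
      exact Relation.EqvGen.trans _ _ _ (Relation.EqvGen.symm _ _ hrel) hsA
    · intro htA
      exact Relation.EqvGen.trans _ _ _ hrel htA
  have hAopen : IsOpen A := by
    rw [isOpen_iff_mem_nhds]
    intro t ht
    obtain ⟨J, hJo, htJ, hJ⟩ := hstep t
    exact Filter.mem_of_superset (hJo.mem_nhds htJ) (fun s hs => (hJ s hs).mpr ht)
  have hAcopen : IsOpen Aᶜ := by
    rw [isOpen_iff_mem_nhds]
    intro t ht
    obtain ⟨J, hJo, htJ, hJ⟩ := hstep t
    exact Filter.mem_of_superset (hJo.mem_nhds htJ)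
      (fun s hs hsA => ht ((hJ s hs).mp hsA))
  have hclopen : IsClopen A := ⟨isOpen_compl_iff.mp hAcopen, hAopen⟩
  have h1A : (1 : unitInterval) ∈ A := by
    have : F.curry 1 = ContinuousMap.id X := by
      ext x
      simp [ContinuousMap.Homotopy.curry_apply]
    rw [hA, Set.mem_setOf_eq, this]
    exact Relation.EqvGen.refl _
  have hAuniv : A = Set.univ := by
    rcases isClopen_iff.mp hclopen with hemp | huniv
    · exact absurd (hemp ▸ h1A) (Set.notMem_empty _)
    · exact huniv
  have h0A : (0 : unitInterval) ∈ A := hAuniv ▸ Set.mem_univ _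
  have hcurry0 : F.curry 0 = f := by
    ext x
    simp [ContinuousMap.Homotopy.curry_apply]
  rw [hA, Set.mem_setOf_eq, hcurry0] at h0A
  exact eq_id_of_eqvGen hmin h0A
end

section
/- For each natural number k, the finite poset F_k on 2k+8 points with two levels of k+4 points each — where on each level there are exactly two vertices of comparability-degree 2 and, for each i in {3,...,k+4}, exactly one vertex of degree i; one degree-2 vertex on each level is comparable to a degree-2 vertex and the degree-(k+4) vertex of the other level, while the other degree-2 vertex is comparable to the degree-(k+3) and degree-(k+4) vertices of the other level — has trivial automorphism group. -/
/-- The comparability relation between the bottom-level vertex `i` and the top-level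
vertex `j` of the asymmetric space `F k` (each level has `k + 4` vertices).
Vertices `0` and `1` of each level have degree `2`; vertex `j` with `2 ≤ j` has degree
`k + 6 - j`, so that each level has exactly one vertex of degree `i` for each
`i ∈ {3, …, k + 4}`.  Vertex `0` is joined to the degree-`2` vertex `0` and the
degree-`(k+4)` vertex `2` of the other level; vertex `1` is joined to the
degree-`(k+4)` vertex `2` and the degree-`(k+3)` vertex `3` of the other level. -/
def frel (k : ℕ) (i j : Fin (k + 4)) : Prop :=
  (i.val = 0 ∧ (j.val = 0 ∨ j.val = 2)) ∨
  (i.val = 1 ∧ (j.val = 2 ∨ j.val = 3)) ∨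
  (j.val = 0 ∧ (i.val = 0 ∨ i.val = 2)) ∨
  (j.val = 1 ∧ (i.val = 2 ∨ i.val = 3)) ∨
  (2 ≤ i.val ∧ 2 ≤ j.val ∧ i.val + j.val ≤ k + 7)

/-- The underlying set of the two-level poset `F k` on `2k + 8` points:
`inl` is the bottom level, `inr` the top level. -/
def FSpace (k : ℕ) : Type := Fin (k + 4) ⊕ Fin (k + 4)

instance (k : ℕ) : Finite (FSpace k) := by unfold FSpace; infer_instance

/-- The partial order of `F k`: a bottom point lies below a top point exactly when
they are related by `frel`. -/
instance (k : ℕ) : PartialOrder (FSpace k) where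
  le x y := x = y ∨ ∃ i j, x = Sum.inl i ∧ y = Sum.inr j ∧ frel k i j
  le_refl x := Or.inl rfl
  le_trans x y z hxy hyz := by
    rcases hxy with rfl | ⟨i, j, rfl, rfl, h⟩
    · exact hyz
    · rcases hyz with rfl | ⟨i', j', h1, _, _⟩
      · exact Or.inr ⟨i, j, rfl, rfl, h⟩
      · exact absurd h1 (by simp)
  le_antisymm x y hxy hyx := by
    rcases hxy with rfl | ⟨i, j, rfl, rfl, h⟩
    · rfl
    · rcases hyx with h' | ⟨i', j', h1, _, _⟩
      · exact h'.symm
      · exact absurd h1 (by simp)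

namespace FAux

variable {k : ℕ}

lemma frel_symm {i j : Fin (k+4)} (h : frel k i j) : frel k j i := by
  unfold frel at *; omega

lemma le_iff {x y : FSpace k} :
    x ≤ y ↔ x = y ∨ ∃ i j, x = Sum.inl i ∧ y = Sum.inr j ∧ frel k i j := Iff.rfl

lemma frel_two {i j : Fin (k+4)} (hj : j.val = 2) : frel k i j := by
  unfold frel; omega

lemma lt_iff' {x y : FSpace k} {i j : Fin (k+4)}
    (hx : x = Sum.inl i) (hy : y = Sum.inr j) : x < y ↔ frel k i j := by
  rw [lt_iff_le_not_ge, le_iff, le_iff]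
  subst hx; subst hy
  constructor
  · rintro ⟨(h | ⟨i', j', hi, hj, h⟩), -⟩
    · exact absurd h (by simp)
    · obtain rfl : i = i' := Sum.inl.inj hi
      obtain rfl : j = j' := Sum.inr.inj hj
      exact h
  · intro h
    refine ⟨Or.inr ⟨i, j, rfl, rfl, h⟩, ?_⟩
    rintro (h' | ⟨i', j', hi, hj, -⟩)
    · simp at h'
    · simp at hi

lemma not_lt_of_inr {x y : FSpace k} {j : Fin (k+4)}
    (hx : x = Sum.inr j) (h : x < y) : False := by
  rcases le_iff.mp h.le with h' | ⟨i', j', hi, hj, -⟩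
  · exact h.ne h'
  · exact absurd (hx.symm.trans hi) (by simp)

lemma maps_inr (φ : FSpace k ≃o FSpace k) (j : Fin (k+4)) :
    ∃ j', φ (Sum.inr j) = Sum.inr j' := by
  obtain ⟨y2, j2, hy2, hj2⟩ : ∃ (y : FSpace k) (j2 : Fin (k+4)),
      y = Sum.inr j2 ∧ j2.val = 2 := ⟨_, ⟨2, by omega⟩, rfl, rfl⟩
  rcases h : φ (Sum.inr j) with i | j'
  · exfalso
    have h2 : φ (Sum.inr j) < y2 := (lt_iff' h hy2).mpr (frel_two hj2)
    rw [← φ.apply_symm_apply y2] at h2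
    exact not_lt_of_inr rfl (φ.lt_iff_lt.mp h2)
  · exact ⟨j', rfl⟩

lemma maps_inl (φ : FSpace k ≃o FSpace k) (i : Fin (k+4)) :
    ∃ i', φ (Sum.inl i) = Sum.inl i' := by
  rcases h : φ (Sum.inl i) with i' | j'
  · exact ⟨i', rfl⟩
  · exfalso
    obtain ⟨j'', hj⟩ := maps_inr φ.symm j'
    have h2 : φ.symm (Sum.inr j') = Sum.inl i := by rw [← h]; exact φ.symm_apply_apply _
    rw [h2] at hj
    exact absurd hj (by simp)

lemma fix_ge2 (σ τ σ' τ' : Fin (k+4) → Fin (k+4))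
    (key : ∀ i j, frel k i j ↔ frel k (σ i) (τ j))
    (key' : ∀ i j, frel k i j ↔ frel k (σ' i) (τ' j))
    (hσσ' : ∀ i, σ' (σ i) = i)
    (hττ' : ∀ j, τ' (τ j) = j) (hτ'τ : ∀ j, τ (τ' j) = j) :
    ∀ i : Fin (k+4), 2 ≤ i.val → σ i = i := by
  have τinj : Function.Injective τ := fun a b h => by
    have := congrArg τ' h; rwa [hττ', hττ'] at this
  have τ'inj : Function.Injective τ' := fun a b h => by
    have := congrArg τ h; rwa [hτ'τ, hτ'τ] at this
  -- every vertex of level ≥ 2 has three distinct neighbours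
  have three : ∀ i : Fin (k+4), 2 ≤ i.val → ∃ j1 j2 j3 : Fin (k+4),
      j1 ≠ j2 ∧ j1 ≠ j3 ∧ j2 ≠ j3 ∧ frel k i j1 ∧ frel k i j2 ∧ frel k i j3 := by
    intro i h2
    have hi := i.isLt
    by_cases h4 : 4 ≤ i.val
    · obtain ⟨j1, hj1⟩ : ∃ j : Fin (k+4), j.val = 2 := ⟨⟨2, by omega⟩, rfl⟩
      obtain ⟨j2, hj2⟩ : ∃ j : Fin (k+4), j.val = 3 := ⟨⟨3, by omega⟩, rfl⟩
      obtain ⟨j3, hj3⟩ : ∃ j : Fin (k+4), j.val = 4 := ⟨⟨4, by omega⟩, rfl⟩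
      exact ⟨j1, j2, j3, Fin.ne_of_val_ne (by omega), Fin.ne_of_val_ne (by omega),
        Fin.ne_of_val_ne (by omega),
        by unfold frel; omega, by unfold frel; omega, by unfold frel; omega⟩
    · obtain ⟨j1, hj1⟩ : ∃ j : Fin (k+4), j.val = 2 := ⟨⟨2, by omega⟩, rfl⟩
      obtain ⟨j2, hj2⟩ : ∃ j : Fin (k+4), j.val = 3 := ⟨⟨3, by omega⟩, rfl⟩
      by_cases h3 : i.val = 3
      · obtain ⟨j3, hj3⟩ : ∃ j : Fin (k+4), j.val = 1 := ⟨⟨1, by omega⟩, rfl⟩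
        exact ⟨j1, j2, j3, Fin.ne_of_val_ne (by omega), Fin.ne_of_val_ne (by omega),
          Fin.ne_of_val_ne (by omega),
          by unfold frel; omega, by unfold frel; omega, by unfold frel; omega⟩
      · obtain ⟨j3, hj3⟩ : ∃ j : Fin (k+4), j.val = 0 := ⟨⟨0, by omega⟩, rfl⟩
        exact ⟨j1, j2, j3, Fin.ne_of_val_ne (by omega), Fin.ne_of_val_ne (by omega),
          Fin.ne_of_val_ne (by omega),
          by unfold frel; omega, by unfold frel; omega, by unfold frel; omega⟩
  -- images of level-≥2 vertices stay in level ≥ 2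
  have ge2 : ∀ (ψ χ : Fin (k+4) → Fin (k+4)),
      (∀ i j, frel k i j ↔ frel k (ψ i) (χ j)) → Function.Injective χ →
      ∀ i, 2 ≤ i.val → 2 ≤ (ψ i).val := by
    intro ψ χ keyψ χinj i h2
    obtain ⟨j1, j2, j3, h12, h13, h23, f1, f2, f3⟩ := three i h2
    have g1 := (keyψ i j1).mp f1
    have g2 := (keyψ i j2).mp f2
    have g3 := (keyψ i j3).mp f3
    have d12 : (χ j1).val ≠ (χ j2).val := fun h => h12 (χinj (Fin.ext h))
    have d13 : (χ j1).val ≠ (χ j3).val := fun h => h13 (χinj (Fin.ext h))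
    have d23 : (χ j2).val ≠ (χ j3).val := fun h => h23 (χinj (Fin.ext h))
    unfold frel at g1 g2 g3
    omega
  -- neighbourhood inclusion characterises the order on level-≥2 vertices
  have nbhd : ∀ a b : Fin (k+4), 2 ≤ a.val → 2 ≤ b.val →
      ((∀ j, frel k a j → frel k b j) ↔ b.val ≤ a.val) := by
    intro a b ha hb
    constructor
    · intro H
      by_contra hab
      push_neg at hab
      have hbl := b.isLt
      have hal := a.isLt
      by_cases h2 : a.val = 2
      · obtain ⟨j0, hj0⟩ : ∃ j : Fin (k+4), j.val = 0 := ⟨⟨0, by omega⟩, rfl⟩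
        have f : frel k a j0 := by unfold frel; omega
        have := H _ f; unfold frel at this; omega
      by_cases h3 : a.val = 3
      · obtain ⟨j0, hj0⟩ : ∃ j : Fin (k+4), j.val = 1 := ⟨⟨1, by omega⟩, rfl⟩
        have f : frel k a j0 := by unfold frel; omega
        have := H _ f; unfold frel at this; omega
      · obtain ⟨j0, hj0⟩ : ∃ j : Fin (k+4), j.val = k + 7 - a.val :=
          ⟨⟨k + 7 - a.val, by omega⟩, rfl⟩
        have f : frel k a j0 := by unfold frel; omega
        have := H _ f; unfold frel at this; omega
    · intro hba j hj
      unfold frel at hj ⊢; omega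
  -- σ-like maps reflect the order on level-≥2 vertices
  have mono : ∀ (ψ χ χ'' : Fin (k+4) → Fin (k+4)),
      (∀ i j, frel k i j ↔ frel k (ψ i) (χ j)) →
      (∀ j, χ (χ'' j) = j) → Function.Injective χ →
      ∀ a b : Fin (k+4), 2 ≤ a.val → 2 ≤ b.val →
        (b.val ≤ a.val ↔ (ψ b).val ≤ (ψ a).val) := by
    intro ψ χ χ'' keyψ hχχ'' χinj a b ha hb
    have hψa := ge2 ψ χ keyψ χinj a ha
    have hψb := ge2 ψ χ keyψ χinj b hb
    rw [← nbhd a b ha hb, ← nbhd (ψ a) (ψ b) hψa hψb]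
    constructor
    · intro H j hj
      rw [← hχχ'' j] at hj ⊢
      exact (keyψ b (χ'' j)).mp (H _ ((keyψ a (χ'' j)).mpr hj))
    · intro H j hj
      exact (keyψ b j).mpr (H _ ((keyψ a j).mp hj))
  -- σ-like maps grow values on level-≥2 vertices
  have grow : ∀ (ψ χ χ'' : Fin (k+4) → Fin (k+4)),
      (∀ i j, frel k i j ↔ frel k (ψ i) (χ j)) →
      (∀ j, χ (χ'' j) = j) → Function.Injective χ →
      ∀ (m : ℕ) (i : Fin (k+4)), i.val = m → 2 ≤ i.val → i.val ≤ (ψ i).val := by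
    intro ψ χ χ'' keyψ hχχ'' χinj m
    induction m with
    | zero => intro i hi h2; omega
    | succ m ih =>
      intro i hi h2
      rcases Nat.lt_or_ge m 2 with hm | hm
      · have := ge2 ψ χ keyψ χinj i h2; omega
      · obtain ⟨p, hpv⟩ : ∃ p : Fin (k+4), p.val = m :=
          ⟨⟨m, by have := i.isLt; omega⟩, rfl⟩
        have hp := ih p hpv (by omega)
        have hiff := mono ψ χ χ'' keyψ hχχ'' χinj p i (by omega) h2
        omega
  intro i h2
  have g1 := grow σ τ τ' key hτ'τ τinj i.val i rfl h2
  have h2σ : 2 ≤ (σ i).val := ge2 σ τ key τinj i h2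
  have g2 := grow σ' τ' τ key' hττ' τ'inj (σ i).val (σ i) rfl h2σ
  rw [hσσ' i] at g2
  exact Fin.ext (by omega)

end FAux

/-- The poset `F k` has trivial automorphism group. -/
theorem FSpace_asymmetric (k : ℕ) (φ : FSpace k ≃o FSpace k) (x : FSpace k) : φ x = x := by
  choose σ hσ using fun i => FAux.maps_inl φ i
  choose τ hτ using fun j => FAux.maps_inr φ j
  choose σ' hσ' using fun i => FAux.maps_inl φ.symm i
  choose τ' hτ' using fun j => FAux.maps_inr φ.symm j
  have hσσ' : ∀ i, σ' (σ i) = i := by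
    intro i
    have h : φ.symm (φ (Sum.inl i)) = Sum.inl i := φ.symm_apply_apply _
    rw [hσ i, hσ' (σ i)] at h
    exact Sum.inl.inj h
  have hσ'σ : ∀ i, σ (σ' i) = i := by
    intro i
    have h : φ (φ.symm (Sum.inl i)) = Sum.inl i := φ.apply_symm_apply _
    rw [hσ' i, hσ (σ' i)] at h
    exact Sum.inl.inj h
  have hττ' : ∀ j, τ' (τ j) = j := by
    intro j
    have h : φ.symm (φ (Sum.inr j)) = Sum.inr j := φ.symm_apply_apply _
    rw [hτ j, hτ' (τ j)] at h
    exact Sum.inr.inj h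
  have hτ'τ : ∀ j, τ (τ' j) = j := by
    intro j
    have h : φ (φ.symm (Sum.inr j)) = Sum.inr j := φ.apply_symm_apply _
    rw [hτ' j, hτ (τ' j)] at h
    exact Sum.inr.inj h
  have key : ∀ i j, frel k i j ↔ frel k (σ i) (τ j) := by
    intro i j
    have h1 := FAux.lt_iff' (k := k) (x := Sum.inl i) (y := Sum.inr j) rfl rfl
    have h2 := FAux.lt_iff' (hσ i) (hτ j)
    rw [← h1, ← h2]
    exact φ.lt_iff_lt.symm
  have key' : ∀ i j, frel k i j ↔ frel k (σ' i) (τ' j) := by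
    intro i j
    have h1 := FAux.lt_iff' (k := k) (x := Sum.inl i) (y := Sum.inr j) rfl rfl
    have h2 := FAux.lt_iff' (hσ' i) (hτ' j)
    rw [← h1, ← h2]
    exact φ.symm.lt_iff_lt.symm
  have fixσ := FAux.fix_ge2 σ τ σ' τ' key key' hσσ' hττ' hτ'τ
  have keyswap : ∀ i j, frel k i j ↔ frel k (τ i) (σ j) := fun i j =>
    ⟨fun h => FAux.frel_symm ((key j i).mp (FAux.frel_symm h)),
     fun h => FAux.frel_symm ((key j i).mpr (FAux.frel_symm h))⟩
  have keyswap' : ∀ i j, frel k i j ↔ frel k (τ' i) (σ' j) := fun i j =>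
    ⟨fun h => FAux.frel_symm ((key' j i).mp (FAux.frel_symm h)),
     fun h => FAux.frel_symm ((key' j i).mpr (FAux.frel_symm h))⟩
  have fixτ := FAux.fix_ge2 τ σ τ' σ' keyswap keyswap' hττ' hσσ' hσ'σ
  have σinj : Function.Injective σ := fun a b h => by
    have := congrArg σ' h; rwa [hσσ', hσσ'] at this
  have τinj : Function.Injective τ := fun a b h => by
    have := congrArg τ' h; rwa [hττ', hττ'] at this
  have σsmall : ∀ i : Fin (k+4), i.val ≤ 1 → (σ i).val ≤ 1 := by
    intro i h1
    by_contra h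
    push_neg at h
    have he : σ i = i := σinj (fixσ (σ i) (by omega))
    rw [he] at h
    omega
  have τsmall : ∀ j : Fin (k+4), j.val ≤ 1 → (τ j).val ≤ 1 := by
    intro j h1
    by_contra h
    push_neg at h
    have he : τ j = j := τinj (fixτ (τ j) (by omega))
    rw [he] at h
    omega
  obtain ⟨z0, hz0⟩ : ∃ z : Fin (k+4), z.val = 0 := ⟨⟨0, by omega⟩, rfl⟩
  obtain ⟨z1, hz1⟩ : ∃ z : Fin (k+4), z.val = 1 := ⟨⟨1, by omega⟩, rfl⟩
  have f00 : frel k z0 z0 := by unfold frel; omega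
  have hσ0 : σ z0 = z0 := by
    by_contra h
    have h1 := σsmall z0 (by omega)
    have ht0 := τsmall z0 (by omega)
    have hv : (σ z0).val = 1 := by
      have hne : (σ z0).val ≠ z0.val := fun hv => h (Fin.ext hv)
      omega
    have hf := (key _ _).mp f00
    unfold frel at hf
    omega
  have hτ0 : τ z0 = z0 := by
    have h1 := τsmall z0 (by omega)
    have hf := (key _ _).mp f00
    rw [hσ0] at hf
    unfold frel at hf
    exact Fin.ext (by omega)
  have hσ1 : σ z1 = z1 := by
    have h1 := σsmall z1 (by omega)
    have hne : (σ z1).val ≠ z0.val := by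
      intro h
      have := σinj ((Fin.ext h : σ z1 = z0).trans hσ0.symm)
      rw [this] at hz1
      omega
    exact Fin.ext (by omega)
  have hτ1 : τ z1 = z1 := by
    have h1 := τsmall z1 (by omega)
    have hne : (τ z1).val ≠ z0.val := by
      intro h
      have := τinj ((Fin.ext h : τ z1 = z0).trans hτ0.symm)
      rw [this] at hz1
      omega
    exact Fin.ext (by omega)
  have σall : ∀ i, σ i = i := by
    intro i
    rcases Nat.lt_or_ge i.val 2 with h | h
    · rcases Nat.lt_or_ge i.val 1 with h0 | h0
      · have hi : i = z0 := Fin.ext (by omega)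
        rw [hi]; exact hσ0
      · have hi : i = z1 := Fin.ext (by omega)
        rw [hi]; exact hσ1
    · exact fixσ i h
  have τall : ∀ j, τ j = j := by
    intro j
    rcases Nat.lt_or_ge j.val 2 with h | h
    · rcases Nat.lt_or_ge j.val 1 with h0 | h0
      · have hj : j = z0 := Fin.ext (by omega)
        rw [hj]; exact hτ0
      · have hj : j = z1 := Fin.ext (by omega)
        rw [hj]; exact hτ1
    · exact fixτ j h
  cases x with
  | inl i => rw [hσ i, σall i]
  | inr j => rw [hτ j, τall j]
end

section
/- For every finite group G there exists a finite topological space X such that the group of homotopy classes of self-homotopy equivalences of X is isomorphic to G. -/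
/-- Self-homotopy-equivalences up to homotopy. -/
def homotopySetoid (X : Type*) [TopologicalSpace X] :
    Setoid (ContinuousMap.HomotopyEquiv X X) :=
  ⟨fun f g => f.toFun.Homotopic g.toFun,
   ⟨fun _ => ContinuousMap.Homotopic.refl _, fun h => h.symm, fun h₁ h₂ => h₁.trans h₂⟩⟩

namespace FinReal

/-- The upper-set (Alexandrov) topology on a preorder. -/
def upperTop (α : Type*) [Preorder α] : TopologicalSpace α where
  IsOpen U := IsUpperSet U
  isOpen_univ := isUpperSet_univ
  isOpen_inter := fun _ _ hs ht => hs.inter ht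
  isOpen_sUnion := fun _ h => isUpperSet_sUnion h

section Gen

variable {α : Type*} [PartialOrder α] [TopologicalSpace α]

theorem upper_open (hT : ∀ U : Set α, IsOpen U ↔ IsUpperSet U) (a : α) :
    IsOpen {y | a ≤ y} :=
  (hT _).2 fun _ _ hxy hax => le_trans hax hxy

theorem continuous_iff_mono (hT : ∀ U : Set α, IsOpen U ↔ IsUpperSet U) {f : α → α} :
    Continuous f ↔ Monotone f := by
  constructor
  · intro hf a b hab
    have h1 : IsOpen (f ⁻¹' {y | f a ≤ y}) := (upper_open hT (f a)).preimage hf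
    exact (hT _).1 h1 hab (le_refl (f a))
  · intro hm
    rw [continuous_def]
    intro U hU
    exact (hT _).2 fun x y hxy hx => (hT _).1 hU (hm hxy) hx

/-- pointwise comparability of continuous self-maps -/
def Cmp (a b : C(α, α)) : Prop := (∀ x, a x ≤ b x) ∨ (∀ x, b x ≤ a x)

theorem homotopic_fence [Finite α] (hT : ∀ U : Set α, IsOpen U ↔ IsUpperSet U)
    {f g : C(α, α)} (h : f.Homotopic g) :
    Relation.ReflTransGen Cmp f g := by
  obtain ⟨H⟩ := h
  let Ht : unitInterval → C(α, α) := fun t =>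
    ⟨fun x => H (t, x), H.continuous.comp (continuous_const.prodMk continuous_id)⟩
  have hW : ∀ t : unitInterval, ∀ᶠ s in nhds t, ∀ x, Ht t x ≤ Ht s x := by
    intro t
    rw [Filter.eventually_all]
    intro x
    have hc : Continuous fun s : unitInterval => H (s, x) :=
      H.continuous.comp (continuous_id.prodMk continuous_const)
    have hop : IsOpen ((fun s : unitInterval => H (s, x)) ⁻¹' {y | Ht t x ≤ y}) :=
      (upper_open hT _).preimage hc
    exact hop.mem_nhds (le_refl (Ht t x))
  set S : Set unitInterval := {t | Relation.ReflTransGen Cmp f (Ht t)} with hS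
  have hSo : IsOpen S := by
    rw [isOpen_iff_mem_nhds]
    intro t ht
    exact (hW t).mono fun s hs => Relation.ReflTransGen.tail ht (Or.inl hs)
  have hSco : IsOpen Sᶜ := by
    rw [isOpen_iff_mem_nhds]
    intro t ht
    exact (hW t).mono fun s hs hmem =>
      ht (Relation.ReflTransGen.tail hmem (Or.inr hs))
  have h0 : (0 : unitInterval) ∈ S := by
    have : Ht 0 = f := ContinuousMap.ext fun x => H.apply_zero x
    rw [hS, Set.mem_setOf_eq, this]
  have hcl : IsClopen S := ⟨⟨by simpa using hSco⟩, hSo⟩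
  have huniv : S = Set.univ := hcl.eq_univ ⟨0, h0⟩
  have h1 : (1 : unitInterval) ∈ S := huniv ▸ Set.mem_univ _
  have : Ht 1 = g := ContinuousMap.ext fun x => H.apply_one x
  rwa [hS, Set.mem_setOf_eq, this] at h1

theorem stong_up {α : Type*} [PartialOrder α] [Finite α]
    (hub : ∀ x : α, ¬ ∃ m, x < m ∧ ∀ y, x < y → m ≤ y)
    {h : α → α} (mono : Monotone h) (hge : ∀ x, x ≤ h x) : ∀ x, h x = x := by
  by_contra hc
  push_neg at hc
  obtain ⟨x₀, hx₀⟩ := hc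
  have hfin : ({x : α | h x ≠ x}).Finite := Set.toFinite _
  obtain ⟨a, ha, hamax⟩ : ∃ a ∈ {x : α | h x ≠ x}, ∀ a' ∈ {x : α | h x ≠ x},
      id a ≤ id a' → id a = id a' := by
    obtain ⟨a, ha⟩ := hfin.exists_maximal ⟨x₀, hx₀⟩
    exact ⟨a, ha.1, fun a' h1 h2 => le_antisymm h2 (ha.2 h1 h2)⟩
  refine hub a ⟨h a, lt_of_le_of_ne (hge a) (Ne.symm ha), fun y hy => ?_⟩
  have hy' : h y = y := by
    by_contra hyy
    exact absurd (hamax y hyy hy.le) (by simpa using hy.ne)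
  calc h a ≤ h y := mono hy.le
  _ = y := hy'

theorem stong_down {α : Type*} [PartialOrder α] [Finite α]
    (hdb : ∀ x : α, ¬ ∃ m, m < x ∧ ∀ y, y < x → y ≤ m)
    {h : α → α} (mono : Monotone h) (hle : ∀ x, h x ≤ x) : ∀ x, h x = x := by
  by_contra hc
  push_neg at hc
  obtain ⟨x₀, hx₀⟩ := hc
  have hfin : ({x : α | h x ≠ x}).Finite := Set.toFinite _
  obtain ⟨a, ha, hamin⟩ : ∃ a ∈ {x : α | h x ≠ x}, ∀ a' ∈ {x : α | h x ≠ x},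
      id a' ≤ id a → id a = id a' := by
    obtain ⟨a, ha⟩ := hfin.exists_minimal ⟨x₀, hx₀⟩
    exact ⟨a, ha.1, fun a' h1 h2 => le_antisymm (ha.2 h1 h2) h2⟩
  refine hdb a ⟨h a, lt_of_le_of_ne (hle a) ha, fun y hy => ?_⟩
  have hy' : h y = y := by
    by_contra hyy
    exact absurd (hamin y hyy hy.le) (by simpa using hy.ne')
  calc y = h y := hy'.symm
  _ ≤ h a := mono hy.le

/-- Key: in a beat-point-free finite Alexandrov space, a map homotopic to the
identity is the identity. -/
theorem fence_to_id [Finite α] (hT : ∀ U : Set α, IsOpen U ↔ IsUpperSet U)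
    (hub : ∀ x : α, ¬ ∃ m, x < m ∧ ∀ y, x < y → m ≤ y)
    (hdb : ∀ x : α, ¬ ∃ m, m < x ∧ ∀ y, y < x → y ≤ m)
    {a : C(α, α)} (hf : Relation.ReflTransGen Cmp a (ContinuousMap.id α)) :
    a = ContinuousMap.id α := by
  induction hf using Relation.ReflTransGen.head_induction_on with
  | refl => rfl
  | head hcmp _ ih =>
    rename_i b c _
    subst ih
    rcases hcmp with hle | hge
    · exact ContinuousMap.ext (stong_down hdb ((continuous_iff_mono hT).1 b.continuous) hle)
    · exact ContinuousMap.ext (stong_up hub ((continuous_iff_mono hT).1 b.continuous) hge)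

/-- Key: in a beat-point-free finite Alexandrov space, a map homotopic to the
identity is the identity. -/
theorem homotopic_id_eq_id [Finite α] (hT : ∀ U : Set α, IsOpen U ↔ IsUpperSet U)
    (hub : ∀ x : α, ¬ ∃ m, x < m ∧ ∀ y, x < y → m ≤ y)
    (hdb : ∀ x : α, ¬ ∃ m, m < x ∧ ∀ y, y < x → y ≤ m)
    {f : C(α, α)} (h : f.Homotopic (ContinuousMap.id α)) :
    f = ContinuousMap.id α :=
  fence_to_id hT hub hdb (homotopic_fence hT h)

end Gen

section Constr

variable (G : Type) [Group G] [Fintype G] [DecidableEq G]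

abbrev SS := {s : G // s ≠ 1}

noncomputable def iot : SS G ≃ Fin (Fintype.card (SS G)) := Fintype.equivFin _

abbrev n1 := Fintype.card (SS G)
abbrev rr := n1 G + 3

abbrev VV := G × Fin (rr G)
abbrev TT := (Bool ⊕ SS G) × G
abbrev PP := VV G ⊕ TT G

def p0 : Fin (rr G) := ⟨0, by show 0 < n1 G + 3; omega⟩
def p1 : Fin (rr G) := ⟨1, by show 1 < n1 G + 3; omega⟩
def pl : Fin (rr G) := ⟨n1 G + 2, by show n1 G + 2 < n1 G + 3; omega⟩

noncomputable def pad (s : SS G) : Finset (Fin (rr G)) :=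
  (Finset.Icc 2 (2 + (iot G s : ℕ))).attachFin (fun m hm => by
    have h2 := (iot G s).isLt
    simp only [Finset.mem_Icc] at hm
    show m < Fintype.card (SS G) + 3
    omega)


noncomputable def mem : TT G → Finset (VV G)
  | (Sum.inl false, g) => {(g, p0 G), (g, p1 G)}
  | (Sum.inl true, g) => {g} ×ˢ Finset.univ
  | (Sum.inr s, g) => {(g * s.1, p0 G), (g * s.1, pl G)} ∪ ({g} ×ˢ pad G s)

variable {G}

lemma mem_pad {s : SS G} {j : Fin (rr G)} :
    j ∈ pad G s ↔ 2 ≤ (j : ℕ) ∧ (j : ℕ) ≤ 2 + (iot G s : ℕ) := by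
  simp [pad, Finset.mem_Icc]

lemma mem_false {g : G} {v : VV G} :
    v ∈ mem G (Sum.inl false, g) ↔ v = (g, p0 G) ∨ v = (g, p1 G) := by
  simp [mem]

lemma mem_true {g : G} {v : VV G} : v ∈ mem G (Sum.inl true, g) ↔ v.1 = g := by
  rw [show mem G (Sum.inl true, g) = {g} ×ˢ Finset.univ from rfl, Finset.mem_product]
  simp

lemma mem_inr {g : G} {s : SS G} {v : VV G} :
    v ∈ mem G (Sum.inr s, g) ↔
      (v = (g * s.1, p0 G) ∨ v = (g * s.1, pl G)) ∨
        (v.1 = g ∧ 2 ≤ (v.2 : ℕ) ∧ (v.2 : ℕ) ≤ 2 + (iot G s : ℕ)) := by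
  rw [show mem G (Sum.inr s, g)
      = {(g * s.1, p0 G), (g * s.1, pl G)} ∪ ({g} ×ˢ pad G s) from rfl]
  rw [Finset.mem_union, Finset.mem_insert, Finset.mem_singleton, Finset.mem_product,
    Finset.mem_singleton]
  constructor
  · rintro ((h | h) | ⟨h1, h2⟩)
    · exact Or.inl (Or.inl h)
    · exact Or.inl (Or.inr h)
    · exact Or.inr ⟨h1, mem_pad.1 h2⟩
  · rintro ((h | h) | ⟨h1, h2⟩)
    · exact Or.inl (Or.inl h)
    · exact Or.inl (Or.inr h)
    · exact Or.inr ⟨h1, mem_pad.2 h2⟩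

lemma card_mem_false (g : G) : (mem G (Sum.inl false, g)).card = 2 := by
  rw [show mem G (Sum.inl false, g) = {(g, p0 G), (g, p1 G)} from rfl]
  rw [Finset.card_insert_of_notMem (by simp [Prod.ext_iff, p0, p1, Fin.ext_iff]),
    Finset.card_singleton]

lemma card_mem_true (g : G) : (mem G (Sum.inl true, g)).card = rr G := by
  rw [show mem G (Sum.inl true, g) = {g} ×ˢ Finset.univ from rfl]
  simp

lemma card_mem_inr (g : G) (s : SS G) :
    (mem G (Sum.inr s, g)).card = 3 + (iot G s : ℕ) := by
  rw [show mem G (Sum.inr s, g)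
      = {(g * s.1, p0 G), (g * s.1, pl G)} ∪ ({g} ×ˢ pad G s) from rfl]
  have hgs : g * s.1 ≠ g := by
    intro h
    exact s.2 (by simpa using (mul_left_cancel (a := g) (by simpa using h)))
  rw [Finset.card_union_of_disjoint, Finset.card_insert_of_notMem
      (by simp [Prod.ext_iff, p0, pl, Fin.ext_iff]), Finset.card_singleton]
  · rw [Finset.card_product, Finset.card_singleton, pad, Finset.card_attachFin,
      Nat.card_Icc]
    omega
  · rw [Finset.disjoint_left]
    rintro v hv hv'
    rw [Finset.mem_product] at hv'
    simp only [Finset.mem_insert, Finset.mem_singleton] at hv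
    rcases hv with h | h <;>
      · rw [h] at hv'
        exact hgs (Finset.mem_singleton.1 hv'.1)

noncomputable instance : PartialOrder (PP G) where
  le x y := x = y ∨ ∃ v τ, x = Sum.inl v ∧ y = Sum.inr τ ∧ v ∈ mem G τ
  le_refl x := Or.inl rfl
  le_trans x y z hxy hyz := by
    rcases hxy with rfl | ⟨v, τ, rfl, rfl, hv⟩
    · exact hyz
    · rcases hyz with rfl | ⟨v', τ', h1, _, _⟩
      · exact Or.inr ⟨v, τ, rfl, rfl, hv⟩
      · exact absurd h1 (by simp)
  le_antisymm x y hxy hyx := by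
    rcases hxy with rfl | ⟨v, τ, rfl, rfl, hv⟩
    · rfl
    · rcases hyx with h | ⟨v', τ', h1, _, _⟩
      · exact h.symm
      · exact absurd h1 (by simp)

lemma le_def {x y : PP G} :
    x ≤ y ↔ x = y ∨ ∃ v τ, x = Sum.inl v ∧ y = Sum.inr τ ∧ v ∈ mem G τ := Iff.rfl

lemma inl_le_inr {v : VV G} {τ : TT G} :
    (Sum.inl v : PP G) ≤ Sum.inr τ ↔ v ∈ mem G τ := by
  rw [le_def]
  constructor
  · rintro (h | ⟨v', τ', h1, h2, h3⟩)
    · exact absurd h (by simp)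
    · rw [Sum.inl.injEq] at h1
      rw [Sum.inr.injEq] at h2
      rwa [h1, h2]
  · intro h
    exact Or.inr ⟨v, τ, rfl, rfl, h⟩

lemma inl_le_inl {v v' : VV G} : (Sum.inl v : PP G) ≤ Sum.inl v' ↔ v = v' := by
  rw [le_def]
  constructor
  · rintro (h | ⟨a, b, h1, h2, h3⟩)
    · exact Sum.inl.inj h
    · exact absurd h2 (by simp)
  · rintro rfl
    exact Or.inl rfl

lemma inr_le {τ : TT G} {y : PP G} : (Sum.inr τ : PP G) ≤ y ↔ y = Sum.inr τ := by
  rw [le_def]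
  constructor
  · rintro (h | ⟨a, b, h1, h2, h3⟩)
    · exact h.symm
    · exact absurd h1 (by simp)
  · rintro rfl
    exact Or.inl rfl

lemma le_inl {x : PP G} {v : VV G} : x ≤ Sum.inl v ↔ x = Sum.inl v := by
  rw [le_def]
  constructor
  · rintro (h | ⟨a, b, h1, h2, h3⟩)
    · exact h
    · exact absurd h2 (by simp)
  · rintro rfl
    exact Or.inl rfl

noncomputable instance : TopologicalSpace (PP G) := upperTop (PP G)

lemma hTP : ∀ U : Set (PP G), IsOpen U ↔ IsUpperSet U := fun _ => Iff.rfl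

lemma exists_two_tops [Nontrivial G] (v : VV G) :
    ∃ τ τ' : TT G, τ ≠ τ' ∧ v ∈ mem G τ ∧ v ∈ mem G τ' := by
  obtain ⟨g, j⟩ := v
  have hjlt := j.isLt
  by_cases h01 : (j : ℕ) ≤ 1
  · refine ⟨(Sum.inl false, g), (Sum.inl true, g), by simp, ?_, mem_true.2 rfl⟩
    rw [mem_false]
    rcases Nat.le_one_iff_eq_zero_or_eq_one.1 h01 with h | h
    · exact Or.inl (by simp [Prod.ext_iff, p0, Fin.ext_iff, h])
    · exact Or.inr (by simp [Prod.ext_iff, p1, Fin.ext_iff, h])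
  · have hn : n1 G = Fintype.card (SS G) := rfl
    by_cases hpad : (j : ℕ) ≤ n1 G + 1
    · refine ⟨(Sum.inr ((iot G).symm ⟨(j : ℕ) - 2, by omega⟩), g), (Sum.inl true, g),
        by simp, ?_, mem_true.2 rfl⟩
      rw [mem_inr]
      refine Or.inr ⟨rfl, ?_, ?_⟩
      · show 2 ≤ (j : ℕ)
        omega
      · rw [Equiv.apply_symm_apply]
        show (j : ℕ) ≤ 2 + ((j : ℕ) - 2)
        omega
    · obtain ⟨x, hx⟩ := exists_ne (1 : G)
      have hj : (j : ℕ) = n1 G + 2 := by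
        have : (j : ℕ) < n1 G + 3 := hjlt
        omega
      refine ⟨(Sum.inr ⟨x, hx⟩, g * x⁻¹), (Sum.inl true, g), by simp, ?_, mem_true.2 rfl⟩
      rw [mem_inr]
      refine Or.inl (Or.inr ?_)
      simp [Prod.ext_iff, pl, Fin.ext_iff, hj]

lemma exists_two_mem (τ : TT G) :
    ∃ v v' : VV G, v ≠ v' ∧ v ∈ mem G τ ∧ v' ∈ mem G τ := by
  have h01 : ((p0 G : Fin (rr G))) ≠ p1 G := by simp [p0, p1, Fin.ext_iff]
  have h0l : ((p0 G : Fin (rr G))) ≠ pl G := by simp [p0, pl, Fin.ext_iff]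
  obtain ⟨c, g⟩ := τ
  rcases c with b | s
  · cases b
    · exact ⟨(g, p0 G), (g, p1 G), by simp [Prod.ext_iff, h01],
        mem_false.2 (Or.inl rfl), mem_false.2 (Or.inr rfl)⟩
    · exact ⟨(g, p0 G), (g, p1 G), by simp [Prod.ext_iff, h01],
        mem_true.2 rfl, mem_true.2 rfl⟩
  · exact ⟨(g * s.1, p0 G), (g * s.1, pl G), by simp [Prod.ext_iff, h0l],
      mem_inr.2 (Or.inl (Or.inl rfl)), mem_inr.2 (Or.inl (Or.inr rfl))⟩

lemma noBeat_up [Nontrivial G] :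
    ∀ x : PP G, ¬ ∃ m, x < m ∧ ∀ y, x < y → m ≤ y := by
  rintro x ⟨m, hxm, hall⟩
  cases x with
  | inr τ => exact hxm.ne' (inr_le.1 hxm.le)
  | inl v =>
    obtain ⟨τ, τ', hne, h1, h2⟩ := exists_two_tops v
    have hm1 : m ≤ Sum.inr τ :=
      hall _ (lt_of_le_of_ne (inl_le_inr.2 h1) (by simp))
    have hm2 : m ≤ Sum.inr τ' :=
      hall _ (lt_of_le_of_ne (inl_le_inr.2 h2) (by simp))
    cases m with
    | inl w => exact hxm.ne (le_inl.1 hxm.le)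
    | inr κ =>
      have e1 : Sum.inr τ = (Sum.inr κ : PP G) := inr_le.1 hm1
      have e2 : Sum.inr τ' = (Sum.inr κ : PP G) := inr_le.1 hm2
      exact hne (Sum.inr.inj (e1.trans e2.symm))

lemma noBeat_down :
    ∀ x : PP G, ¬ ∃ m, m < x ∧ ∀ y, y < x → y ≤ m := by
  rintro x ⟨m, hmx, hall⟩
  cases x with
  | inl v => exact hmx.ne (le_inl.1 hmx.le)
  | inr τ =>
    obtain ⟨v, v', hne, h1, h2⟩ := exists_two_mem τ
    have hm1 : Sum.inl v ≤ m :=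
      hall _ (lt_of_le_of_ne (inl_le_inr.2 h1) (by simp))
    have hm2 : Sum.inl v' ≤ m :=
      hall _ (lt_of_le_of_ne (inl_le_inr.2 h2) (by simp))
    cases m with
    | inr κ => exact hmx.ne (inr_le.1 hmx.le).symm
    | inl w =>
      exact hne ((inl_le_inl.1 hm1).trans (inl_le_inl.1 hm2).symm)

/-- the translation map -/
def tr (t : G) : PP G → PP G :=
  Sum.map (fun v => (t * v.1, v.2)) (fun τ => (τ.1, t * τ.2))

lemma mem_tr (t : G) {v : VV G} {c : Bool ⊕ SS G} {g : G} (hv : v ∈ mem G (c, g)) :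
    ((t * v.1, v.2) : VV G) ∈ mem G (c, t * g) := by
  rcases c with b | s
  · cases b
    · rcases mem_false.1 hv with h | h <;> rw [h]
      · exact mem_false.2 (Or.inl rfl)
      · exact mem_false.2 (Or.inr rfl)
    · exact mem_true.2 (by rw [mem_true.1 hv])
  · rcases mem_inr.1 hv with (h | h) | ⟨h1, h2, h3⟩
    · rw [h]; exact mem_inr.2 (Or.inl (Or.inl (by rw [mul_assoc])))
    · rw [h]; exact mem_inr.2 (Or.inl (Or.inr (by rw [mul_assoc])))
    · exact mem_inr.2 (Or.inr ⟨by rw [h1], h2, h3⟩)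

lemma tr_mono (t : G) : Monotone (tr t) := by
  intro x y hxy
  rcases hxy with rfl | ⟨v, τ, rfl, rfl, hv⟩
  · exact le_refl _
  · obtain ⟨c, g⟩ := τ
    exact inl_le_inr.2 (mem_tr t hv)

lemma tr_tr (t t' : G) (p : PP G) : tr t (tr t' p) = tr (t * t') p := by
  rcases p with v | τ <;> simp [tr, mul_assoc]

lemma tr_one (p : PP G) : tr (1 : G) p = p := by
  rcases p with v | τ <;> simp [tr]

lemma tr_continuous (t : G) : Continuous (tr t) :=
  (continuous_iff_mono hTP).2 (tr_mono t)

section Classify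

set_option linter.unusedSectionVars false

variable [Nontrivial G]

/-- the size of each class of tops -/
noncomputable def szfun : Bool ⊕ SS G → ℕ
  | Sum.inl false => 2
  | Sum.inl true => rr G
  | Sum.inr s => 3 + (iot G s : ℕ)

lemma card_mem (c : Bool ⊕ SS G) (g : G) : (mem G (c, g)).card = szfun c := by
  rcases c with b | s
  · cases b
    · exact card_mem_false g
    · exact card_mem_true g
  · exact card_mem_inr g s

lemma szfun_inj : Function.Injective (szfun (G := G)) := by
  have hn : n1 G = Fintype.card (SS G) := rfl
  have hr : rr G = Fintype.card (SS G) + 3 := rfl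
  rintro (b | s) (b' | s') h
  · cases b <;> cases b' <;> first | rfl |
      (exfalso; revert h; simp only [szfun]; intro h; omega)
  · exfalso
    have := (iot G s').isLt
    cases b <;> (revert h; simp only [szfun]; intro h; omega)
  · exfalso
    have := (iot G s).isLt
    cases b' <;> (revert h; simp only [szfun]; intro h; omega)
  · simp only [szfun, Nat.add_left_cancel_iff] at h
    have : iot G s = iot G s' := Fin.ext h
    rw [(iot G).apply_eq_iff_eq] at this
    rw [this]

theorem classify {h h' : PP G → PP G} (mh : Monotone h) (mh' : Monotone h')
    (i1 : ∀ p, h' (h p) = p) (i2 : ∀ p, h (h' p) = p) :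
    ∃ t : G, ∀ p, h p = tr t p := by
  have hn : n1 G = Fintype.card (SS G) := rfl
  have hinj : Function.Injective h := fun a b hab => by rw [← i1 a, hab, i1]
  have hinj' : Function.Injective h' := fun a b hab => by rw [← i2 a, hab, i2]
  have hsm : StrictMono h := fun a b hab =>
    lt_of_le_of_ne (mh hab.le) fun e => hab.ne (hinj e)
  have hsm' : StrictMono h' := fun a b hab =>
    lt_of_le_of_ne (mh' hab.le) fun e => hab.ne (hinj' e)
  -- h maps vertices to vertices and tops to tops; same for h'
  have hVgen : ∀ (f : PP G → PP G), StrictMono f →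
      (∀ v : VV G, ∃ v', f (Sum.inl v) = Sum.inl v') := by
    intro f hf v
    obtain ⟨τ, τ', hne, h1, h2⟩ := exists_two_tops v
    have hlt : (Sum.inl v : PP G) < Sum.inr τ :=
      lt_of_le_of_ne (inl_le_inr.2 h1) (by simp)
    have hlt2 := hf hlt
    cases hh : f (Sum.inl v) with
    | inl w => exact ⟨w, rfl⟩
    | inr κ =>
      rw [hh] at hlt2
      exact absurd (inr_le.1 hlt2.le).symm hlt2.ne
  have hTgen : ∀ (f : PP G → PP G), StrictMono f →
      (∀ τ : TT G, ∃ κ, f (Sum.inr τ) = Sum.inr κ) := by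
    intro f hf τ
    obtain ⟨v, v', hvne, h1, h2⟩ := exists_two_mem τ
    have hlt : (Sum.inl v : PP G) < Sum.inr τ :=
      lt_of_le_of_ne (inl_le_inr.2 h1) (by simp)
    have hlt2 := hf hlt
    obtain ⟨w, hw⟩ := hVgen f hf v
    cases hh : f (Sum.inr τ) with
    | inr κ => exact ⟨κ, rfl⟩
    | inl u =>
      rw [hw, hh] at hlt2
      exact absurd (inl_le_inl.1 hlt2.le) (fun e => hlt2.ne (by rw [e]))
  choose ρ hρ using hVgen h hsm
  choose θ hθ using hTgen h hsm
  choose ρ' hρ' using hVgen h' hsm'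
  choose θ' hθ' using hTgen h' hsm'
  have ρinv : ∀ v, ρ' (ρ v) = v := fun v => by
    have := i1 (Sum.inl v); rw [hρ, hρ'] at this; exact Sum.inl.inj this
  have ρinv2 : ∀ v, ρ (ρ' v) = v := fun v => by
    have := i2 (Sum.inl v); rw [hρ', hρ] at this; exact Sum.inl.inj this
  have θinv : ∀ τ, θ' (θ τ) = τ := fun τ => by
    have := i1 (Sum.inr τ); rw [hθ, hθ'] at this; exact Sum.inr.inj this
  have ρinj : Function.Injective ρ := Function.LeftInverse.injective ρinv
  have θinj : Function.Injective θ := Function.LeftInverse.injective θinv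
  have memIff : ∀ (v : VV G) (τ : TT G), v ∈ mem G τ ↔ ρ v ∈ mem G (θ τ) := by
    intro v τ
    constructor
    · intro hm
      have := mh (inl_le_inr.2 hm)
      rw [hρ, hθ] at this
      exact inl_le_inr.1 this
    · intro hm
      have := mh' (inl_le_inr.2 hm)
      rw [hρ', hθ', ρinv, θinv] at this
      exact inl_le_inr.1 this
  have memImage : ∀ τ, mem G (θ τ) = (mem G τ).image ρ := by
    intro τ
    ext w
    rw [Finset.mem_image]
    constructor
    · intro hw
      exact ⟨ρ' w, (memIff (ρ' w) τ).2 (by rwa [ρinv2]), ρinv2 w⟩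
    · rintro ⟨x, hx, rfl⟩
      exact (memIff x τ).1 hx
  have cardEq : ∀ τ, (mem G (θ τ)).card = (mem G τ).card := fun τ => by
    rw [memImage, Finset.card_image_of_injective _ ρinj]
  have classEq : ∀ c g, θ (c, g) = (c, (θ (c, g)).2) := by
    intro c g
    have hcard := cardEq (c, g)
    rw [show θ (c, g) = ((θ (c, g)).1, (θ (c, g)).2) from rfl] at hcard ⊢
    rw [card_mem, card_mem] at hcard
    rw [szfun_inj hcard]
  -- the column translation function
  set w : G → G := fun g => (θ (Sum.inl true, g)).2 with hwdef
  have hw : ∀ g, θ (Sum.inl true, g) = (Sum.inl true, w g) := fun g => classEq _ g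
  have colρ : ∀ g j, (ρ (g, j)).1 = w g := by
    intro g j
    have hm : ((g, j) : VV G) ∈ mem G (Sum.inl true, g) := mem_true.2 rfl
    have := (memIff _ _).1 hm
    rw [hw] at this
    exact mem_true.1 this
  have winj : Function.Injective w := by
    intro a b hab
    have : θ (Sum.inl true, a) = θ (Sum.inl true, b) := by rw [hw, hw, hab]
    have := θinj this
    exact (Prod.ext_iff.1 this).2
  -- analysis of the cross edges
  have crossρ0 : ∀ (s : SS G) (g : G),
      ρ (g * s.1, p0 G) = ((θ (Sum.inr s, g)).2 * s.1, p0 G) ∧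
      w (g * s.1) = (θ (Sum.inr s, g)).2 * s.1 := by
    intro s g
    set u : G := (θ (Sum.inr s, g)).2 with hudef
    have hu : θ (Sum.inr s, g) = (Sum.inr s, u) := classEq _ g
    have hcm : ((g * s.1, p0 G) : VV G) ∈ mem G (Sum.inr s, g) :=
      mem_inr.2 (Or.inl (Or.inl rfl))
    have h1 := (memIff _ _).1 hcm
    rw [hu] at h1
    -- position of ρ (g * s, p0) is 0 or 1
    have hI2 : ((g * s.1, p0 G) : VV G) ∈ mem G (Sum.inl false, g * s.1) :=
      mem_false.2 (Or.inl rfl)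
    have h2 := (memIff _ _).1 hI2
    rw [classEq (Sum.inl false) (g * s.1)] at h2
    have hpos : (ρ (g * s.1, p0 G)).2 = p0 G ∨ (ρ (g * s.1, p0 G)).2 = p1 G := by
      rcases mem_false.1 h2 with h | h
      · exact Or.inl (by rw [h])
      · exact Or.inr (by rw [h])
    rcases mem_inr.1 h1 with (hc | hc) | ⟨hc1, hc2, hc3⟩
    · constructor
      · exact hc
      · have := colρ (g * s.1) (p0 G)
        rw [hc] at this
        exact this.symm
    · exfalso
      rcases hpos with hp | hp <;> rw [hc] at hp <;>
        (revert hp; simp [pl, p0, p1, Fin.ext_iff])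
    · exfalso
      rcases hpos with hp | hp <;> rw [hp] at hc2 <;>
        (revert hc2; simp [p0, p1])
  have uEq : ∀ (s : SS G) (g : G), (θ (Sum.inr s, g)).2 = w g := by
    intro s g
    set u : G := (θ (Sum.inr s, g)).2 with hudef
    have hu : θ (Sum.inr s, g) = (Sum.inr s, u) := classEq _ g
    have hp2lt : (2 : ℕ) < rr G := by show 2 < n1 G + 3; omega
    have hm : ((g, ⟨2, hp2lt⟩) : VV G) ∈ mem G (Sum.inr s, g) := by
      rw [mem_inr]
      exact Or.inr ⟨rfl, by simp, by simp⟩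
    have h1 := (memIff _ _).1 hm
    rw [hu] at h1
    rcases mem_inr.1 h1 with (hc | hc) | ⟨hc1, hc2, hc3⟩
    · exfalso
      have hcol := colρ g ⟨2, hp2lt⟩
      rw [hc] at hcol
      have := (crossρ0 s g).2
      rw [← hudef] at this
      rw [← this] at hcol
      have hgg := winj hcol
      exact s.2 (by simpa using (mul_left_cancel (a := g) (by simpa using hgg.symm)))
    · exfalso
      have hcol := colρ g ⟨2, hp2lt⟩
      rw [hc] at hcol
      have := (crossρ0 s g).2
      rw [← hudef] at this
      rw [← this] at hcol
      have hgg := winj hcol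
      exact s.2 (by simpa using (mul_left_cancel (a := g) (by simpa using hgg.symm)))
    · have hcol := colρ g ⟨2, hp2lt⟩
      rw [hc1] at hcol
      exact hcol
  have wmul : ∀ (g : G) (s : SS G), w (g * s.1) = w g * s.1 := by
    intro g s
    have := (crossρ0 s g).2
    rw [uEq] at this
    exact this
  set t : G := w 1 with htdef
  have wt : ∀ g, w g = t * g := by
    intro g
    by_cases hg : g = 1
    · rw [hg, mul_one]
    · have := wmul 1 ⟨g, hg⟩
      rw [one_mul] at this
      exact this
  obtain ⟨x₀, hx₀⟩ := exists_ne (1 : G)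
  set s₀ : SS G := ⟨x₀, hx₀⟩ with hs₀
  have ρp0 : ∀ g, ρ (g, p0 G) = (t * g, p0 G) := by
    intro g
    have := (crossρ0 s₀ (g * (s₀.1)⁻¹)).1
    rw [uEq, wt] at this
    simpa [mul_assoc] using this
  -- the other cross position
  have crossρl : ∀ (s : SS G) (g : G),
      ρ (g * s.1, pl G) = (w g * s.1, pl G) := by
    intro s g
    have himg := memImage (Sum.inr s, g)
    rw [classEq, uEq] at himg
    have htgt : ((w g * s.1, pl G) : VV G) ∈ mem G (Sum.inr s, w g) :=
      mem_inr.2 (Or.inl (Or.inr rfl))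
    rw [himg, Finset.mem_image] at htgt
    obtain ⟨x, hx, hρx⟩ := htgt
    rcases mem_inr.1 hx with (hc | hc) | ⟨hc1, hc2, hc3⟩
    · exfalso
      rw [hc] at hρx
      rw [(crossρ0 s g).1, uEq] at hρx
      have := (Prod.ext_iff.1 hρx).2
      revert this
      simp [p0, pl, Fin.ext_iff]
    · rw [hc] at hρx
      rw [hρx]
    · exfalso
      have hcol : (ρ x).1 = w g := by
        rw [show x = (x.1, x.2) from rfl, hc1]
        exact colρ g x.2
      rw [hρx] at hcol
      exact s.2 (mul_left_cancel (a := w g) (by simpa using hcol))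
  obtain ⟨x₀', hx₀'⟩ := exists_ne (1 : G)
  have ρpl : ∀ g, ρ (g, pl G) = (t * g, pl G) := by
    intro g
    have := crossρl s₀ (g * (s₀.1)⁻¹)
    rw [wt] at this
    simpa [mul_assoc] using this
  have ρp1 : ∀ g, ρ (g, p1 G) = (t * g, p1 G) := by
    intro g
    have hcfst : (θ (Sum.inl false, g)).2 = t * g := by
      have himg := memImage (Sum.inl false, g)
      rw [classEq] at himg
      have hmem : ρ (g, p0 G) ∈ mem G (Sum.inl false, (θ (Sum.inl false, g)).2) := by
        rw [himg, Finset.mem_image]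
        exact ⟨(g, p0 G), mem_false.2 (Or.inl rfl), rfl⟩
      rw [ρp0] at hmem
      rcases mem_false.1 hmem with hc | hc
      · exact (Prod.ext_iff.1 hc).1.symm
      · exfalso
        have := (Prod.ext_iff.1 hc).2
        revert this
        simp [p0, p1, Fin.ext_iff]
    have hm : ((g, p1 G) : VV G) ∈ mem G (Sum.inl false, g) := mem_false.2 (Or.inr rfl)
    have h2 := (memIff _ _).1 hm
    rw [classEq, hcfst] at h2
    rcases mem_false.1 h2 with hc | hc
    · exfalso
      have := ρinj (hc.trans (ρp0 g).symm)
      have := (Prod.ext_iff.1 this).2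
      revert this
      simp [p0, p1, Fin.ext_iff]
    · exact hc
  -- padding positions
  have ρpadMem : ∀ (s : SS G) (g : G) (j : Fin (rr G)), j ∈ pad G s →
      ρ (g, j) = (t * g, (ρ (g, j)).2) ∧ (ρ (g, j)).2 ∈ pad G s := by
    intro s g j hj
    have hm : ((g, j) : VV G) ∈ mem G (Sum.inr s, g) :=
      mem_inr.2 (Or.inr ⟨rfl, (mem_pad.1 hj).1, (mem_pad.1 hj).2⟩)
    have h1 := (memIff _ _).1 hm
    rw [classEq, uEq] at h1
    rcases mem_inr.1 h1 with (hc | hc) | ⟨hc1, hc2, hc3⟩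
    · exfalso
      have hcol := colρ g j
      rw [hc] at hcol
      exact s.2 (mul_left_cancel (a := w g) (by simpa using hcol))
    · exfalso
      have hcol := colρ g j
      rw [hc] at hcol
      exact s.2 (mul_left_cancel (a := w g) (by simpa using hcol))
    · constructor
      · rw [show ρ (g, j) = ((ρ (g, j)).1, (ρ (g, j)).2) from rfl, hc1, wt]
      · exact mem_pad.2 ⟨hc2, hc3⟩
  have ρpadSurj : ∀ (s : SS G) (g : G) (j : Fin (rr G)), j ∈ pad G s →
      ∃ j' ∈ pad G s, ρ (g, j') = (t * g, j) := by
    intro s g j hj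
    have himg := memImage (Sum.inr s, g)
    rw [classEq, uEq] at himg
    have htgt : ((w g, j) : VV G) ∈ mem G (Sum.inr s, w g) :=
      mem_inr.2 (Or.inr ⟨rfl, (mem_pad.1 hj).1, (mem_pad.1 hj).2⟩)
    rw [himg, Finset.mem_image] at htgt
    obtain ⟨x, hx, hρx⟩ := htgt
    rcases mem_inr.1 hx with (hc | hc) | ⟨hc1, hc2, hc3⟩
    · exfalso
      rw [hc, (crossρ0 s g).1, uEq] at hρx
      have hsnd : p0 G = j := congrArg Prod.snd hρx
      have hjb := (mem_pad.1 hj).1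
      rw [← hsnd] at hjb
      revert hjb
      simp [p0]
    · exfalso
      rw [hc, crossρl] at hρx
      have hsnd : pl G = j := congrArg Prod.snd hρx
      have hjb := (mem_pad.1 hj).2
      have hlt := ((iot G) s).isLt
      have hn2 : n1 G = Fintype.card (SS G) := rfl
      rw [← hsnd] at hjb
      revert hjb
      simp only [pl]
      omega
    · rw [show x = ((g : G), x.2) from Prod.ext_iff.2 ⟨hc1, rfl⟩] at hρx
      refine ⟨x.2, mem_pad.2 ⟨hc2, hc3⟩, ?_⟩
      rw [hρx, wt]
  have πpad : ∀ k : ℕ, ∀ hk : k < n1 G, ∀ g : G, ∀ hk2 : k + 2 < rr G,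
      ρ (g, ⟨k + 2, hk2⟩) = (t * g, ⟨k + 2, hk2⟩) := by
    intro k
    induction k using Nat.strong_induction_on with
    | _ k IH =>
      intro hk g hk2
      set s : SS G := (iot G).symm ⟨k, hk⟩ with hs
      have hι : ((iot G) s : ℕ) = k := by rw [hs, Equiv.apply_symm_apply]
      have hjp : (⟨k + 2, hk2⟩ : Fin (rr G)) ∈ pad G s :=
        mem_pad.2 ⟨by show 2 ≤ k + 2; omega, by rw [hι]; show k + 2 ≤ 2 + k; omega⟩
      have h1 := ρpadMem s g _ hjp
      by_cases hcase : ((ρ (g, ⟨k + 2, hk2⟩)).2 : ℕ) = k + 2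
      · have hfin : (ρ (g, ⟨k + 2, hk2⟩)).2 = (⟨k + 2, hk2⟩ : Fin (rr G)) :=
          Fin.ext hcase
        rw [h1.1, hfin]
      · exfalso
        have hb := mem_pad.1 h1.2
        rw [hι] at hb
        set m : ℕ := ((ρ (g, ⟨k + 2, hk2⟩)).2 : ℕ) - 2 with hm
        have hmk : m < k := by omega
        have hm2 : m + 2 < rr G := by omega
        have hIH := IH m hmk (lt_trans hmk hk) g hm2
        have hfin : (ρ (g, ⟨k + 2, hk2⟩)).2 = (⟨m + 2, hm2⟩ : Fin (rr G)) :=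
          Fin.ext (by show ((ρ (g, ⟨k + 2, hk2⟩)).2 : ℕ) = m + 2; omega)
        have heq : ρ (g, ⟨k + 2, hk2⟩) = ρ (g, ⟨m + 2, hm2⟩) := by
          rw [h1.1, hfin, hIH]
        have hinjeq := ρinj heq
        have := (Prod.ext_iff.1 hinjeq).2
        have hvals : k + 2 = m + 2 := by
          have := congrArg Fin.val this
          exact this
        omega
  have πall : ∀ (g : G) (j : Fin (rr G)), ρ (g, j) = (t * g, j) := by
    intro g j
    rcases j with ⟨jv, hjv⟩
    have hjlt : jv < n1 G + 3 := hjv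
    by_cases h0 : jv = 0
    · subst h0
      exact ρp0 g
    · by_cases h1 : jv = 1
      · subst h1
        exact ρp1 g
      · by_cases hl : jv = n1 G + 2
        · subst hl
          exact ρpl g
        · have hk2 : (jv - 2) + 2 < rr G := by show _ < n1 G + 3; omega
          have hres := πpad (jv - 2) (by omega) g hk2
          have heq : (⟨jv, hjv⟩ : Fin (rr G)) = ⟨jv - 2 + 2, hk2⟩ :=
            Fin.ext (by show jv = jv - 2 + 2; omega)
          rw [heq]
          exact hres
  have θall : ∀ (c : Bool ⊕ SS G) (g : G), θ (c, g) = (c, t * g) := by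
    intro c g
    rcases c with b | s
    · cases b
      · rw [classEq]
        have hcfst : (θ (Sum.inl false, g)).2 = t * g := by
          have himg := memImage (Sum.inl false, g)
          rw [classEq] at himg
          have hmem : ρ (g, p0 G) ∈ mem G (Sum.inl false, (θ (Sum.inl false, g)).2) := by
            rw [himg, Finset.mem_image]
            exact ⟨(g, p0 G), mem_false.2 (Or.inl rfl), rfl⟩
          rw [ρp0] at hmem
          rcases mem_false.1 hmem with hc | hc
          · exact (Prod.ext_iff.1 hc).1.symm
          · exfalso
            have := (Prod.ext_iff.1 hc).2
            revert this
            simp [p0, p1, Fin.ext_iff]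
        rw [hcfst]
      · rw [hw, wt]
    · rw [classEq, uEq, wt]
  refine ⟨t, fun p => ?_⟩
  rcases p with ⟨g, j⟩ | ⟨c, g⟩
  · rw [hρ, πall]
    rfl
  · rw [hθ, θall]
    rfl

end Classify

section Wrap

noncomputable def trC (t : G) : C(PP G, PP G) := ⟨tr t, tr_continuous t⟩

lemma trC_comp (t t' : G) : (trC t).comp (trC t') = trC (t * t') :=
  ContinuousMap.ext fun p => tr_tr t t' p

lemma trC_one : trC (1 : G) = ContinuousMap.id (PP G) :=
  ContinuousMap.ext fun p => tr_one p

noncomputable def trHE (t : G) : ContinuousMap.HomotopyEquiv (PP G) (PP G) where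
  toFun := trC t
  invFun := trC t⁻¹
  left_inv := by
    rw [trC_comp, inv_mul_cancel, trC_one]
  right_inv := by
    rw [trC_comp, mul_inv_cancel, trC_one]

/-- read off the translation element -/
def p2g : PP G → G
  | Sum.inl v => v.1
  | Sum.inr _ => 1

noncomputable def valOf (f : ContinuousMap.HomotopyEquiv (PP G) (PP G)) : G :=
  p2g (f.toFun (Sum.inl ((1 : G), p0 G)))

variable [Nontrivial G]

lemma classVal (f : ContinuousMap.HomotopyEquiv (PP G) (PP G)) :
    ∀ p, f.toFun p = tr (valOf f) p := by
  have mono1 : Monotone f.toFun := (continuous_iff_mono hTP).1 f.toFun.continuous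
  have mono2 : Monotone f.invFun := (continuous_iff_mono hTP).1 f.invFun.continuous
  have hli : f.invFun.comp f.toFun = ContinuousMap.id (PP G) :=
    homotopic_id_eq_id hTP noBeat_up noBeat_down f.left_inv
  have hri : f.toFun.comp f.invFun = ContinuousMap.id (PP G) :=
    homotopic_id_eq_id hTP noBeat_up noBeat_down f.right_inv
  have i1 : ∀ p, f.invFun (f.toFun p) = p := fun p => by
    have := ContinuousMap.ext_iff.1 hli p
    simpa using this
  have i2 : ∀ p, f.toFun (f.invFun p) = p := fun p => by
    have := ContinuousMap.ext_iff.1 hri p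
    simpa using this
  obtain ⟨t, ht⟩ := classify mono1 mono2 i1 i2
  have hval : valOf f = t := by
    rw [valOf, ht]
    show t * 1 = t
    rw [mul_one]
  rw [hval]
  exact ht

lemma homotopic_val_eq {f g : ContinuousMap.HomotopyEquiv (PP G) (PP G)}
    (hfg : f.toFun.Homotopic g.toFun) : valOf f = valOf g := by
  set a := valOf f with ha
  set b := valOf g with hb
  have hcomp := (ContinuousMap.Homotopic.refl (trC b⁻¹)).comp hfg
  have h2 : (trC b⁻¹).comp g.toFun = ContinuousMap.id (PP G) := by
    rw [ContinuousMap.ext_iff]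
    intro p
    show tr b⁻¹ (g.toFun p) = p
    rw [classVal g p, tr_tr, inv_mul_cancel, tr_one]
  have h3 : (trC b⁻¹).comp f.toFun = trC (b⁻¹ * a) := by
    rw [ContinuousMap.ext_iff]
    intro p
    show tr b⁻¹ (f.toFun p) = tr (b⁻¹ * a) p
    rw [classVal f p, tr_tr]
  rw [h2, h3] at hcomp
  have hkey := homotopic_id_eq_id hTP noBeat_up noBeat_down hcomp
  have := ContinuousMap.ext_iff.1 hkey (Sum.inl ((1 : G), p0 G))
  have hfst : b⁻¹ * a * 1 = 1 := by
    have h4 : (Sum.inl (b⁻¹ * a * 1, p0 G) : PP G) = Sum.inl ((1 : G), p0 G) := this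
    exact (Prod.ext_iff.1 (Sum.inl.inj h4)).1
  rw [mul_one] at hfst
  have : a = b * 1 := by rw [← hfst, ← mul_assoc, mul_inv_cancel, one_mul]
  rw [this, mul_one]

noncomputable def eqvFun : Quotient (homotopySetoid (PP G)) → G :=
  Quotient.lift (fun f => (valOf f)⁻¹) (fun f g hfg => by
    show (valOf f)⁻¹ = (valOf g)⁻¹
    rw [homotopic_val_eq hfg])

lemma eqvFun_mk (f : ContinuousMap.HomotopyEquiv (PP G) (PP G)) :
    eqvFun (Quotient.mk (homotopySetoid (PP G)) f) = (valOf f)⁻¹ := rfl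

noncomputable def eqv : Quotient (homotopySetoid (PP G)) ≃ G where
  toFun := eqvFun
  invFun := fun t => Quotient.mk (homotopySetoid (PP G)) (trHE t⁻¹)
  left_inv := by
    apply Quotient.ind
    intro f
    rw [eqvFun_mk]
    apply Quotient.sound
    show (trHE ((valOf f)⁻¹)⁻¹).toFun.Homotopic f.toFun
    have heqf : (trHE (G := G) ((valOf f)⁻¹)⁻¹).toFun = f.toFun := by
      rw [ContinuousMap.ext_iff]
      intro p
      rw [classVal f p]
      show tr ((valOf f)⁻¹)⁻¹ p = _
      rw [inv_inv]
    rw [heqf]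
  right_inv := by
    intro t
    show (valOf (trHE t⁻¹))⁻¹ = t
    have : valOf (trHE (G := G) t⁻¹) = t⁻¹ := by
      rw [valOf]
      show p2g (Sum.inl (t⁻¹ * 1, p0 G) : PP G) = t⁻¹
      show t⁻¹ * 1 = t⁻¹
      rw [mul_one]
    rw [this, inv_inv]

lemma eqv_mul (f g : ContinuousMap.HomotopyEquiv (PP G) (PP G)) :
    eqv (Quotient.mk (homotopySetoid (PP G)) (f.trans g)) =
      eqv (Quotient.mk (homotopySetoid (PP G)) f) *
        eqv (Quotient.mk (homotopySetoid (PP G)) g) := by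
  have h0 : ∀ q, (eqv (G := G)) q = eqvFun q := fun _ => rfl
  rw [h0, h0, h0, eqvFun_mk, eqvFun_mk, eqvFun_mk]
  have hval : valOf (f.trans g) = valOf g * valOf f := by
    rw [valOf]
    show p2g (g.toFun (f.toFun (Sum.inl ((1 : G), p0 G)))) = _
    rw [classVal f, classVal g]
    show p2g (Sum.inl (valOf g * (valOf f * 1), p0 G) : PP G) = _
    show valOf g * (valOf f * 1) = valOf g * valOf f
    rw [mul_one]
  rw [hval, mul_inv_rev]

end Wrap
end Constr

theorem main_nontrivial (G : Type) [Group G] [Fintype G] [DecidableEq G] [Nontrivial G] :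
    ∃ (X : Type) (_ : TopologicalSpace X), Finite X ∧
      ∃ e : Quotient (homotopySetoid X) ≃ G,
        ∀ f g : ContinuousMap.HomotopyEquiv X X,
          e (Quotient.mk (homotopySetoid X) (f.trans g)) =
            e (Quotient.mk (homotopySetoid X) f) * e (Quotient.mk (homotopySetoid X) g) := by
  refine ⟨PP G, inferInstance, ?_, eqv, eqv_mul⟩
  infer_instance

theorem main_trivial (G : Type*) [Group G] [Subsingleton G] :
    ∃ (X : Type) (_ : TopologicalSpace X), Finite X ∧
      ∃ e : Quotient (homotopySetoid X) ≃ G,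
        ∀ f g : ContinuousMap.HomotopyEquiv X X,
          e (Quotient.mk (homotopySetoid X) (f.trans g)) =
            e (Quotient.mk (homotopySetoid X) f) * e (Quotient.mk (homotopySetoid X) g) := by
  refine ⟨Unit, inferInstance, inferInstance, ?_⟩
  have hsub : ∀ q q' : Quotient (homotopySetoid Unit), q = q' := by
    intro q q'
    induction q using Quotient.ind
    induction q' using Quotient.ind
    apply Quotient.sound
    rename_i f f'
    show f.toFun.Homotopic f'.toFun
    have : f.toFun = f'.toFun := ContinuousMap.ext fun x => Subsingleton.elim _ _
    rw [this]
  refine ⟨{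
    toFun := fun _ => 1
    invFun := fun _ => Quotient.mk (homotopySetoid Unit) (ContinuousMap.HomotopyEquiv.refl Unit)
    left_inv := fun q => hsub _ q
    right_inv := fun a => Subsingleton.elim 1 a }, ?_⟩
  intro f g
  show (1 : G) = 1 * 1
  rw [mul_one]

end FinReal

/-- Every finite group is the group of homotopy classes of self-homotopy
equivalences of some finite topological space, with the group operation induced by
composition. -/
theorem realization_finite_space (G : Type*) [Group G] [Finite G] :
    ∃ (X : Type) (_ : TopologicalSpace X), Finite X ∧
      ∃ e : Quotient (homotopySetoid X) ≃ G,
        ∀ f g : ContinuousMap.HomotopyEquiv X X,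
          e (Quotient.mk (homotopySetoid X) (f.trans g)) =
            e (Quotient.mk (homotopySetoid X) f) * e (Quotient.mk (homotopySetoid X) g) := by
  rcases subsingleton_or_nontrivial G with hs | hn
  · exact FinReal.main_trivial G
  · haveI : Finite (Shrink.{0} G) := Finite.of_equiv G (equivShrink.{0} G)
    letI : Fintype (Shrink.{0} G) := Fintype.ofFinite _
    letI : DecidableEq (Shrink.{0} G) := Classical.decEq _
    haveI : Nontrivial (Shrink.{0} G) := (equivShrink.{0} G).symm.nontrivial
    obtain ⟨X, topX, finX, e1, hmul⟩ := FinReal.main_nontrivial (Shrink.{0} G)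
    let φ : Shrink.{0} G ≃* G := Shrink.mulEquiv
    refine ⟨X, topX, finX, e1.trans φ.toEquiv, ?_⟩
    intro f g
    show φ (e1 _) = φ (e1 _) * φ (e1 _)
    rw [hmul f g, map_mul]
end

section
/- For every finite group G there exists a finite poset P such that the order-automorphism group of P is isomorphic to G. -/
namespace RealizationAux

variable (H : Type) [Group H]

/-- Non-identity elements, used as edge labels. -/
abbrev S := {s : H // s ≠ 1}

variable (ι : S H → ℕ)

/-- The poset carrier: vertices (left) and chain-gadget elements (right). -/
def Pt := H ⊕ {x : (H × S H) × ℕ // x.2 ≤ ι x.1.2}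

variable {H ι}

/-- Vertex element. -/
def vt (g : H) : Pt H ι := Sum.inl g

/-- Chain element number `k` of the gadget for the edge `g → g * s`. -/
def ct (g : H) (s : S H) (k : ℕ) (h : k ≤ ι s) : Pt H ι := Sum.inr ⟨((g, s), k), h⟩

variable (H ι) in
def ple : Pt H ι → Pt H ι → Prop
  | Sum.inl g, Sum.inl g' => g = g'
  | Sum.inl g, Sum.inr x => g = x.val.1.1 ∨ (g = x.val.1.1 * (x.val.1.2 : H) ∧ x.val.2 = ι x.val.1.2)
  | Sum.inr _, Sum.inl _ => False
  | Sum.inr x, Sum.inr y => x.val.1 = y.val.1 ∧ x.val.2 ≤ y.val.2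

lemma ple_refl (x : Pt H ι) : ple H ι x x := by
  rcases x with g | x
  · exact rfl
  · exact ⟨rfl, le_rfl⟩

lemma ple_inl_inl {g g' : H} : ple H ι (Sum.inl g) (Sum.inl g') ↔ g = g' := Iff.rfl

lemma ple_inl_inr {g : H} {x : {x : (H × S H) × ℕ // x.2 ≤ ι x.1.2}} :
    ple H ι (Sum.inl g) (Sum.inr x) ↔
      g = x.val.1.1 ∨ (g = x.val.1.1 * (x.val.1.2 : H) ∧ x.val.2 = ι x.val.1.2) := Iff.rfl

lemma ple_inr_inl {g : H} {x : {x : (H × S H) × ℕ // x.2 ≤ ι x.1.2}} :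
    ¬ ple H ι (Sum.inr x) (Sum.inl g) := fun hh => hh

lemma ple_inr_inr {x y : {x : (H × S H) × ℕ // x.2 ≤ ι x.1.2}} :
    ple H ι (Sum.inr x) (Sum.inr y) ↔ x.val.1 = y.val.1 ∧ x.val.2 ≤ y.val.2 := Iff.rfl

lemma ple_trans (a b c : Pt H ι) (hab : ple H ι a b) (hbc : ple H ι b c) : ple H ι a c := by
  rcases a with g | x <;> rcases b with g' | y <;> rcases c with g'' | z <;>
    simp only [ple_inl_inl, ple_inl_inr, ple_inr_inr] at hab hbc ⊢ <;>
    try exact (ple_inr_inl hab).elim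
  · exact hab.trans hbc
  · subst hab; exact hbc
  · exact (ple_inr_inl hbc).elim
  · rcases hab with rfl | ⟨rfl, hk⟩
    · rcases hbc with ⟨h1, -⟩
      left; rw [h1]
    · rcases hbc with ⟨h1, h2⟩
      right
      refine ⟨by rw [← h1], le_antisymm z.2 ?_⟩
      rw [← h1, ← hk]; exact h2
  · exact (ple_inr_inl hbc).elim
  · exact ⟨hab.1.trans hbc.1, hab.2.trans hbc.2⟩

lemma ple_antisymm (a b : Pt H ι) (hab : ple H ι a b) (hba : ple H ι b a) : a = b := by
  rcases a with g | x <;> rcases b with g' | y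
  · rw [ple_inl_inl] at hab; rw [hab]
  · exact (ple_inr_inl hba).elim
  · exact (ple_inr_inl hab).elim
  · rw [ple_inr_inr] at hab hba
    exact congrArg Sum.inr (Subtype.ext (Prod.ext hab.1 (le_antisymm hab.2 hba.2)))

instance : PartialOrder (Pt H ι) where
  le := ple H ι
  le_refl := ple_refl
  le_trans := ple_trans
  le_antisymm := ple_antisymm

@[simp] lemma vt_le_vt {g g' : H} : (vt g : Pt H ι) ≤ vt g' ↔ g = g' := Iff.rfl

@[simp] lemma vt_le_ct {g g' : H} {s : S H} {k : ℕ} {h : k ≤ ι s} :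
    (vt g : Pt H ι) ≤ ct g' s k h ↔ g = g' ∨ (g = g' * (s : H) ∧ k = ι s) := Iff.rfl

@[simp] lemma not_ct_le_vt {g g' : H} {s : S H} {k : ℕ} {h : k ≤ ι s} :
    ¬ (ct g s k h : Pt H ι) ≤ vt g' := fun hh => hh

@[simp] lemma ct_le_ct {g g' : H} {s s' : S H} {k k' : ℕ} {h : k ≤ ι s} {h' : k' ≤ ι s'} :
    (ct g s k h : Pt H ι) ≤ ct g' s' k' h' ↔ (g = g' ∧ s = s') ∧ k ≤ k' := by
  have base : (ct g s k h : Pt H ι) ≤ ct g' s' k' h' ↔ ((g, s) = (g', s') ∧ k ≤ k') := Iff.rfl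
  rw [base, Prod.mk.injEq]

@[simp] lemma ct_eq_ct {g g' : H} {s s' : S H} {k k' : ℕ} {h : k ≤ ι s} {h' : k' ≤ ι s'} :
    (ct g s k h : Pt H ι) = ct g' s' k' h' ↔ g = g' ∧ s = s' ∧ k = k' := by
  unfold ct
  constructor
  · intro hh
    injection hh with hh
    have := congrArg Subtype.val hh
    simp only [Prod.mk.injEq] at this
    exact ⟨this.1.1, this.1.2, this.2⟩
  · rintro ⟨rfl, rfl, rfl⟩; rfl

@[simp] lemma vt_eq_vt {g g' : H} : (vt g : Pt H ι) = vt g' ↔ g = g' :=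
  ⟨fun h => Sum.inl.inj h, fun h => by rw [h]⟩

@[simp] lemma vt_ne_ct {g g' : H} {s : S H} {k : ℕ} {h : k ≤ ι s} :
    (vt g : Pt H ι) ≠ ct g' s k h := fun hh => Sum.inl_ne_inr hh

lemma pt_cases (x : Pt H ι) :
    (∃ g, x = vt g) ∨ ∃ g s k h, x = ct g s k h := by
  rcases x with g | ⟨⟨⟨g, s⟩, k⟩, h⟩
  · exact Or.inl ⟨g, rfl⟩
  · exact Or.inr ⟨g, s, k, h, rfl⟩

lemma ct_lt_ct {g g' : H} {s s' : S H} {k k' : ℕ} {h : k ≤ ι s} {h' : k' ≤ ι s'} :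
    (ct g s k h : Pt H ι) < ct g' s' k' h' ↔ (g = g' ∧ s = s') ∧ k < k' := by
  constructor
  · intro hlt
    rcases ct_le_ct.mp hlt.le with ⟨⟨rfl, rfl⟩, hk⟩
    exact ⟨⟨rfl, rfl⟩, lt_of_le_of_ne hk (fun hh => hlt.ne (ct_eq_ct.mpr ⟨rfl, rfl, hh⟩))⟩
  · rintro ⟨⟨rfl, rfl⟩, hk⟩
    exact lt_of_le_of_ne (ct_le_ct.mpr ⟨⟨rfl, rfl⟩, hk.le⟩)
      (fun hh => by rw [ct_eq_ct] at hh; omega)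

lemma vt_lt_ct {g : H} {s : S H} {k : ℕ} {h : k ≤ ι s} :
    (vt g : Pt H ι) < ct g s k h :=
  lt_of_le_of_ne (vt_le_ct.mpr (Or.inl rfl)) vt_ne_ct

section Lemmas

variable (hι1 : ∀ s, 1 ≤ ι s)
include hι1

lemma isMin_iff {x : Pt H ι} : IsMin x ↔ ∃ g, x = vt g := by
  rcases pt_cases x with ⟨g, rfl⟩ | ⟨g, s, k, h, rfl⟩
  · refine iff_of_true (fun y hy => ?_) ⟨g, rfl⟩
    rcases pt_cases y with ⟨g', rfl⟩ | ⟨g', s', k', h', rfl⟩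
    · rw [vt_le_vt] at hy ⊢; exact hy.symm
    · exact (not_ct_le_vt hy).elim
  · refine iff_of_false (fun hmin => ?_) ?_
    · have hle : (vt g : Pt H ι) ≤ ct g s k h := vt_le_ct.mpr (Or.inl rfl)
      exact vt_ne_ct (le_antisymm (hmin hle) hle).symm
    · rintro ⟨g', hg'⟩
      exact vt_ne_ct hg'.symm

/-- The elements strictly below `ct g s 0`. -/
lemma lt_ct_zero {g : H} {s : S H} {h0 : (0:ℕ) ≤ ι s} {y : Pt H ι} :
    y < ct g s 0 h0 ↔ y = vt g := by
  constructor
  · intro hy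
    rcases pt_cases y with ⟨g', rfl⟩ | ⟨g', s', k', h', rfl⟩
    · rcases (vt_le_ct.mp hy.le) with rfl | ⟨rfl, hk⟩
      · rfl
      · exact absurd hk.symm (by have := hι1 s; omega)
    · rcases ct_lt_ct.mp hy with ⟨⟨rfl, rfl⟩, hk⟩
      omega
  · rintro rfl; exact vt_lt_ct

/-- `ct g s 0` is an "atom": non-minimal with all strictly-smaller elements minimal. -/
lemma atom_iff {x : Pt H ι} :
    (¬ IsMin x ∧ ∀ y < x, IsMin y) ↔ ∃ (g : H) (s : S H) (h0 : (0:ℕ) ≤ ι s), x = ct g s 0 h0 := by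
  rcases pt_cases x with ⟨g, rfl⟩ | ⟨g, s, k, h, rfl⟩
  · refine iff_of_false (fun hc => hc.1 ((isMin_iff hι1).mpr ⟨g, rfl⟩)) ?_
    rintro ⟨g', s', h0, hh⟩; exact vt_ne_ct hh
  · rcases Nat.eq_zero_or_pos k with rfl | hk
    · refine iff_of_true ⟨fun hmin => ?_, fun y hy => ?_⟩ ⟨g, s, h, rfl⟩
      · rw [isMin_iff hι1] at hmin; rcases hmin with ⟨g', hg'⟩; exact vt_ne_ct hg'.symm
      · rw [lt_ct_zero hι1] at hy; rw [hy, isMin_iff hι1]; exact ⟨g, rfl⟩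
    · refine iff_of_false (fun hc => ?_) ?_
      · have hlt : (ct g s 0 (Nat.zero_le _) : Pt H ι) < ct g s k h :=
          ct_lt_ct.mpr ⟨⟨rfl, rfl⟩, hk⟩
        have hmin := hc.2 _ hlt
        rw [isMin_iff hι1] at hmin
        rcases hmin with ⟨g', hg'⟩; exact vt_ne_ct hg'.symm
      · rintro ⟨g', s', h0, hh⟩
        rw [ct_eq_ct] at hh
        omega

omit hι1 in
lemma isMax_ct_iff {g : H} {s : S H} {k : ℕ} {h : k ≤ ι s} :
    IsMax (ct g s k h : Pt H ι) ↔ k = ι s := by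
  constructor
  · intro hmax
    by_contra hne
    have hle : (ct g s k h : Pt H ι) ≤ ct g s (ι s) le_rfl := ct_le_ct.mpr ⟨⟨rfl, rfl⟩, h⟩
    have := hmax hle
    rcases ct_le_ct.mp this with ⟨-, hk⟩
    omega
  · rintro rfl
    intro y hy
    rcases pt_cases y with ⟨g', rfl⟩ | ⟨g', s', k', h', rfl⟩
    · exact (not_ct_le_vt hy).elim
    · rcases ct_le_ct.mp hy with ⟨⟨rfl, rfl⟩, hk⟩
      exact ct_le_ct.mpr ⟨⟨rfl, rfl⟩, h'⟩

omit hι1 in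
/-- Covers of a chain element: exactly the next chain element. -/
lemma covBy_ct {g : H} {s : S H} {k : ℕ} {h : k ≤ ι s} {y : Pt H ι} :
    (ct g s k h : Pt H ι) ⋖ y ↔ ∃ (hk : k + 1 ≤ ι s), y = ct g s (k+1) hk := by
  constructor
  · rintro ⟨hlt, hmid⟩
    rcases pt_cases y with ⟨g', rfl⟩ | ⟨g', s', k', h', rfl⟩
    · exact (not_ct_le_vt hlt.le).elim
    · rcases ct_lt_ct.mp hlt with ⟨⟨rfl, rfl⟩, hk⟩
      have hk1 : k + 1 ≤ ι s := le_trans hk h'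
      refine ⟨hk1, ?_⟩
      rcases eq_or_lt_of_le (Nat.succ_le_of_lt hk) with heq | hlt'
      · exact (ct_eq_ct.mpr ⟨rfl, rfl, heq.symm⟩)
      · exact ((hmid (ct_lt_ct.mpr ⟨⟨rfl, rfl⟩, Nat.lt_succ_self k⟩ :
            (ct g s k h : Pt H ι) < ct g s (k+1) hk1))
            (ct_lt_ct.mpr ⟨⟨rfl, rfl⟩, hlt'⟩)).elim
  · rintro ⟨hk, rfl⟩
    refine ⟨ct_lt_ct.mpr ⟨⟨rfl, rfl⟩, Nat.lt_succ_self k⟩, ?_⟩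
    rintro z hz1 hz2
    rcases pt_cases z with ⟨g', rfl⟩ | ⟨g', s', k', h', rfl⟩
    · exact not_ct_le_vt hz1.le
    · rcases ct_lt_ct.mp hz1 with ⟨⟨rfl, rfl⟩, hk1⟩
      rcases ct_lt_ct.mp hz2 with ⟨-, hk2⟩
      omega

end Lemmas

section Iso

/-- Left multiplication on the poset. -/
def lmulFun (a : H) : Pt H ι → Pt H ι
  | Sum.inl g => Sum.inl (a * g)
  | Sum.inr ⟨((g, s), k), h⟩ => Sum.inr ⟨((a * g, s), k), h⟩

lemma lmulFun_lmulFun (a b : H) (x : Pt H ι) :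
    lmulFun a (lmulFun b x) = lmulFun (a * b) x := by
  rcases x with g | ⟨⟨⟨g, s⟩, k⟩, h⟩
  · show (Sum.inl (a * (b * g)) : Pt H ι) = Sum.inl (a * b * g)
    rw [mul_assoc]
  · show (Sum.inr ⟨((a * (b * g), s), k), h⟩ : Pt H ι) = Sum.inr ⟨((a * b * g, s), k), h⟩
    rw [mul_assoc]

lemma ple_lmulFun (a : H) (x y : Pt H ι) :
    ple H ι (lmulFun a x) (lmulFun a y) ↔ ple H ι x y := by
  rcases x with g | ⟨⟨⟨g, s⟩, k⟩, h⟩ <;> rcases y with g' | ⟨⟨⟨g', s'⟩, k'⟩, h'⟩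
  · show a * g = a * g' ↔ g = g'
    exact mul_right_inj a
  · show a * g = a * g' ∨ (a * g = a * g' * (s' : H) ∧ k' = ι s') ↔
      g = g' ∨ (g = g' * (s' : H) ∧ k' = ι s')
    constructor
    · rintro (hh | ⟨hh, hk⟩)
      · exact Or.inl (mul_left_cancel hh)
      · exact Or.inr ⟨mul_left_cancel (by rw [hh, mul_assoc]), hk⟩
    · rintro (rfl | ⟨rfl, hk⟩)
      · exact Or.inl rfl
      · exact Or.inr ⟨(mul_assoc ..).symm, hk⟩
  · exact Iff.rfl
  · show (a * g, s) = (a * g', s') ∧ k ≤ k' ↔ (g, s) = (g', s') ∧ k ≤ k'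
    simp only [Prod.mk.injEq, mul_right_inj]

/-- Left multiplication as an order automorphism of `Pt H ι`. -/
def lmul (a : H) : (Pt H ι) ≃o (Pt H ι) where
  toFun := lmulFun a
  invFun := lmulFun a⁻¹
  left_inv x := by rw [lmulFun_lmulFun, inv_mul_cancel]; rcases x with g | ⟨⟨⟨g, s⟩, k⟩, h⟩
                   · show (Sum.inl (1 * g) : Pt H ι) = Sum.inl g
                     rw [one_mul]
                   · show (Sum.inr ⟨((1 * g, s), k), h⟩ : Pt H ι) = Sum.inr ⟨((g, s), k), h⟩
                     rw [one_mul]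
  right_inv x := by rw [lmulFun_lmulFun, mul_inv_cancel]; rcases x with g | ⟨⟨⟨g, s⟩, k⟩, h⟩
                    · show (Sum.inl (1 * g) : Pt H ι) = Sum.inl g
                      rw [one_mul]
                    · show (Sum.inr ⟨((1 * g, s), k), h⟩ : Pt H ι) = Sum.inr ⟨((g, s), k), h⟩
                      rw [one_mul]
  map_rel_iff' {x y} := ple_lmulFun a x y

lemma lmul_vt (a g : H) : (lmul a : (Pt H ι) ≃o (Pt H ι)) (vt g) = vt (a * g) := rfl

lemma lmul_ct (a g : H) (s : S H) (k : ℕ) (h : k ≤ ι s) :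
    (lmul a : (Pt H ι) ≃o (Pt H ι)) (ct g s k h) = ct (a * g) s k h := rfl

variable (H ι) in
/-- The homomorphism `H →* Aut(Pt H ι)`. -/
def Phi : H →* ((Pt H ι) ≃o (Pt H ι)) where
  toFun := lmul
  map_one' := by
    ext x
    rcases pt_cases x with ⟨g, rfl⟩ | ⟨g, s, k, hk, rfl⟩
    · show vt (1 * g) = _
      rw [one_mul]; rfl
    · show ct (1 * g) s k hk = _
      rw [one_mul]; rfl
  map_mul' a b := by
    ext x
    rcases pt_cases x with ⟨g, rfl⟩ | ⟨g, s, k, hk, rfl⟩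
    · show vt (a * b * g) = vt (a * (b * g))
      rw [mul_assoc]
    · show ct (a * b * g) s k hk = ct (a * (b * g)) s k hk
      rw [mul_assoc]

end Iso

section Main

variable (hι1 : ∀ s, 1 ≤ ι s) (hinj : Function.Injective ι)
variable (φ : (Pt H ι) ≃o (Pt H ι))

include hι1

lemma sigma_exists : ∀ g : H, ∃ g' : H, φ (vt g) = vt g' := by
  intro g
  have : IsMin (φ (vt g)) := by
    rw [φ.isMin_apply]
    exact (isMin_iff hι1).mpr ⟨g, rfl⟩
  rw [isMin_iff hι1] at this
  exact this

/-- The induced permutation on vertices. -/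
noncomputable def sigma (g : H) : H := (sigma_exists hι1 φ g).choose

lemma sigma_spec (g : H) : φ (vt g) = vt (sigma hι1 φ g) := (sigma_exists hι1 φ g).choose_spec

lemma sigma_injective : Function.Injective (sigma hι1 φ) := by
  intro a b hab
  have h1 := sigma_spec hι1 φ a
  rw [hab, ← sigma_spec hι1 φ b] at h1
  exact vt_eq_vt.mp (φ.injective h1)

lemma phi_atom (g : H) (s : S H) (h0 : (0:ℕ) ≤ ι s) :
    ∃ (s' : S H) (h0' : (0:ℕ) ≤ ι s'), φ (ct g s 0 h0) = ct (sigma hι1 φ g) s' 0 h0' := by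
  have hat : ¬ IsMin (ct g s 0 h0 : Pt H ι) ∧ ∀ y < (ct g s 0 h0 : Pt H ι), IsMin y :=
    (atom_iff hι1).mpr ⟨g, s, h0, rfl⟩
  have hat' : ¬ IsMin (φ (ct g s 0 h0)) ∧ ∀ y < φ (ct g s 0 h0), IsMin y := by
    constructor
    · rw [φ.isMin_apply]; exact hat.1
    · intro y hy
      have hy' : φ.symm y < ct g s 0 h0 := by
        have := φ.symm.strictMono hy
        rwa [φ.symm_apply_apply] at this
      have := hat.2 (φ.symm y) hy'
      exact φ.symm.isMin_apply.mp this
  rw [atom_iff hι1] at hat'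
  rcases hat' with ⟨g', s', h0', heq⟩
  refine ⟨s', h0', ?_⟩
  have hglt : (vt g : Pt H ι) < ct g s 0 h0 := vt_lt_ct
  have hφlt := φ.strictMono hglt
  rw [sigma_spec hι1 φ, heq, lt_ct_zero hι1, vt_eq_vt] at hφlt
  rw [heq, hφlt]

lemma phi_chain (g : H) (s : S H) :
    ∃ s' : S H, ι s ≤ ι s' ∧
      ∀ (k : ℕ) (hk : k ≤ ι s) (hk' : k ≤ ι s'),
        φ (ct g s k hk) = ct (sigma hι1 φ g) s' k hk' := by
  obtain ⟨s', h0', hbase⟩ := phi_atom hι1 φ g s (Nat.zero_le _)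
  have key : ∀ (k : ℕ) (hk : k ≤ ι s), ∃ (hk' : k ≤ ι s'),
      φ (ct g s k hk) = ct (sigma hι1 φ g) s' k hk' := by
    intro k
    induction k with
    | zero => intro hk; exact ⟨Nat.zero_le _, hbase⟩
    | succ n ih =>
      intro hk
      obtain ⟨hn', hφn⟩ := ih (by omega)
      have hcov : (ct g s n (by omega) : Pt H ι) ⋖ ct g s (n+1) hk :=
        covBy_ct.mpr ⟨hk, rfl⟩
      have hcov2 : φ (ct g s n (by omega)) ⋖ φ (ct g s (n+1) hk) := by
        rw [apply_covBy_apply_iff φ]; exact hcov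
      rw [hφn, covBy_ct] at hcov2
      rcases hcov2 with ⟨hk1, heq⟩
      exact ⟨hk1, heq⟩
  refine ⟨s', ?_, fun k hk hk' => ?_⟩
  · exact (key (ι s) le_rfl).choose
  · exact (key k hk).choose_spec

include hinj in
lemma phi_ct (g : H) (s : S H) (k : ℕ) (hk : k ≤ ι s) :
    φ (ct g s k hk) = ct (sigma hι1 φ g) s k hk := by
  obtain ⟨s', hle, hch⟩ := phi_chain hι1 φ g s
  have hmax : IsMax (ct g s (ι s) le_rfl : Pt H ι) := isMax_ct_iff.mpr rfl
  have hmax' : IsMax (φ (ct g s (ι s) le_rfl)) := φ.isMax_apply.mpr hmax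
  rw [hch (ι s) le_rfl hle] at hmax'
  have hss : ι s = ι s' := le_antisymm hle (isMax_ct_iff.mp hmax' ▸ le_rfl)
  have heq : s = s' := hinj hss
  subst heq
  exact hch k hk hk

include hinj in
lemma sigma_mul (g : H) (s : S H) :
    sigma hι1 φ (g * s) = sigma hι1 φ g * s := by
  have hle : (vt (g * (s : H)) : Pt H ι) ≤ ct g s (ι s) le_rfl :=
    vt_le_ct.mpr (Or.inr ⟨rfl, rfl⟩)
  have hmono := φ.monotone hle
  rw [sigma_spec hι1 φ, phi_ct hι1 hinj, vt_le_ct] at hmono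
  rcases hmono with hh | ⟨hh, -⟩
  · exfalso
    have hgg : g * (s : H) = g := sigma_injective hι1 φ hh
    exact s.2 (mul_left_cancel (hgg.trans (mul_one g).symm))
  · exact hh

include hinj in
lemma sigma_eq (g : H) : sigma hι1 φ g = sigma hι1 φ 1 * g := by
  by_cases hg : g = 1
  · subst hg; rw [mul_one]
  · have := sigma_mul hι1 hinj φ 1 ⟨g, hg⟩
    rwa [one_mul] at this

include hinj in
lemma Phi_surjective : ∃ a : H, Phi H ι a = φ := by
  refine ⟨sigma hι1 φ 1, ?_⟩
  ext x
  rcases pt_cases x with ⟨g, rfl⟩ | ⟨g, s, k, hk, rfl⟩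
  · show (lmul _ : (Pt H ι) ≃o (Pt H ι)) (vt g) = φ (vt g)
    rw [lmul_vt, sigma_spec hι1 φ g, sigma_eq hι1 hinj φ g]
  · show (lmul _ : (Pt H ι) ≃o (Pt H ι)) (ct g s k hk) = φ (ct g s k hk)
    rw [lmul_ct, phi_ct hι1 hinj φ g, sigma_eq hι1 hinj φ g]

end Main

lemma Phi_injective : Function.Injective (Phi H ι) := by
  intro a b hab
  have h1 : Phi H ι a (vt 1) = Phi H ι b (vt 1) := by rw [hab]
  have h2 : (vt (a * 1) : Pt H ι) = vt (b * 1) := h1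
  rw [vt_eq_vt, mul_one, mul_one] at h2
  exact h2

/-- The realization theorem for a group in universe 0. -/
theorem main (H : Type) [Group H] [Finite H] :
    ∃ (P : Type) (_ : PartialOrder P), Finite P ∧ Nonempty (H ≃* (P ≃o P)) := by
  classical
  have : Fintype H := Fintype.ofFinite H
  set ι : S H → ℕ := fun s => (Fintype.equivFin (S H) s : ℕ) + 1 with hιdef
  have hι1 : ∀ s, 1 ≤ ι s := fun s => Nat.le_add_left 1 _
  have hinj : Function.Injective ι := by
    intro a b hab
    simp only [hιdef] at hab
    exact (Fintype.equivFin (S H)).injective (Fin.ext (by omega))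
  have hfin : Finite (Pt H ι) := by
    have : Finite {x : (H × S H) × ℕ // x.2 ≤ ι x.1.2} := by
      have hbound : ∀ x : {x : (H × S H) × ℕ // x.2 ≤ ι x.1.2},
          x.val.2 < Fintype.card (S H) + 2 := by
        intro x
        have h1 := x.2
        have h2 := (Fintype.equivFin (S H) x.val.1.2).isLt
        simp only [hιdef] at h1
        omega
      exact Finite.of_injective
        (fun x => ((x.val.1, (⟨x.val.2, hbound x⟩ : Fin (Fintype.card (S H) + 2)))))
        (by rintro ⟨⟨p, k⟩, hk⟩ ⟨⟨p', k'⟩, hk'⟩ h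
            simp only [Prod.mk.injEq, Fin.mk.injEq] at h
            exact Subtype.ext (Prod.ext h.1 h.2))
    exact inferInstanceAs (Finite (H ⊕ {x : (H × S H) × ℕ // x.2 ≤ ι x.1.2}))
  refine ⟨Pt H ι, inferInstance, hfin, ⟨?_⟩⟩
  refine MulEquiv.ofBijective (Phi H ι) ⟨Phi_injective, fun φ => ?_⟩
  exact Phi_surjective hι1 hinj φ

end RealizationAux

/-- Every finite group is the group of order automorphisms of some finite poset. -/
theorem realization_finite_poset (G : Type*) [Group G] [Finite G] :
    ∃ (P : Type) (_ : PartialOrder P), Finite P ∧ Nonempty (G ≃* (P ≃o P)) := by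
  classical
  haveI : Small.{0} G := by
    haveI : Countable G := Finite.to_countable
    infer_instance
  haveI : Finite (Shrink.{0} G) := Finite.of_equiv G (equivShrink G)
  obtain ⟨P, hP, hfin, ⟨ψ⟩⟩ := RealizationAux.main (Shrink.{0} G)
  exact ⟨P, hP, hfin, ⟨((Shrink.mulEquiv (α := G)).symm.trans ψ)⟩⟩
end
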